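/- arXiv:1906.01889 — 6 statements merged into one kernel-verified Lean document; each statement's English description precedes it below -/
import Mathlib

section
/- Assume the dual orbit setup. For a continuous compactly supported function f : Q × V → ℂ, define its Kohn–Nirenberg kernel K_f : V × V → ℂ by K_f(v,v') := ∫_{V̂} ξ(v−v') · f(g(ξ), v') dν(ξ). Given continuous compactly supported f₁, f₂ : Q × V → ℂ, define f₃ : Q × V → ℂ by f₃(q',v) := ∫_{Q×V} φ(q)(w−v) · conj(φ(q')(w−v)) · f₁(q',w) · f₂(q,v) · |q|⁻¹ dμ_Q(q) dμ_V(w). Then all these integrals converge absolutely and, for all (v,v') ∈ V × V, ∫_V K_{f₁}(v,w) · K_{f₂}(w,v') dμ_V(w) = K_{f₃}(v,v'). (The composition of Kohn–Nirenberg kernels is the kernel of the explicit twisted product f₁ ⋆ f₂ = f₃.) -/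
open MeasureTheory
open scoped ENNReal
open scoped Pointwise NNReal


private lemma integrable_of_bound_support' {α : Type*} [MeasurableSpace α] (μ : Measure α)
    (F : α → ℂ) (hF : AEStronglyMeasurable F μ) (C : ℝ) (S : Set α) (hS : MeasurableSet S)
    (hμS : μ S < ⊤) (hb : ∀ a ∈ S, ‖F a‖ ≤ C) (hsupp : ∀ a, F a ≠ 0 → a ∈ S) :
    Integrable F μ := by
  refine ⟨hF, ?_⟩
  have h : ∀ a, (‖F a‖₊ : ℝ≥0∞) ≤ S.indicator (fun _ => ENNReal.ofReal C) a := by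
    intro a
    by_cases ha : a ∈ S
    · rw [Set.indicator_of_mem ha, ← ENNReal.ofReal_coe_nnreal, coe_nnnorm]
      exact ENNReal.ofReal_le_ofReal (hb a ha)
    · have h0 : F a = 0 := by
        by_contra h0; exact ha (hsupp a h0)
      rw [Set.indicator_of_notMem ha]
      simp [h0]
  have : HasFiniteIntegral F μ := by
    rw [HasFiniteIntegral]
    calc ∫⁻ a, ‖F a‖₊ ∂μ ≤ ∫⁻ a, S.indicator (fun _ => ENNReal.ofReal C) a ∂μ :=
          lintegral_mono h
      _ = ENNReal.ofReal C * μ S := lintegral_indicator_const hS _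
      _ < ⊤ := ENNReal.mul_lt_top ENNReal.ofReal_lt_top hμS
  exact this


/-- The Kohn–Nirenberg kernel of a function `f` on `G = Q ⋉ V`:
`K_f(v,v') = ∫_{V̂} ξ(v−v') · f(g(ξ), v') dν(ξ)` (the abelian group `V` is written
multiplicatively, so `v − v'` is `v / v'`). -/
noncomputable def knKer {Q V : Type*} [CommGroup V] [TopologicalSpace V]
    [MeasurableSpace (PontryaginDual V)]
    (ν : Measure (PontryaginDual V)) (g : PontryaginDual V → Q)
    (f : Q × V → ℂ) (v v' : V) : ℂ :=
  ∫ ξ : PontryaginDual V, ((ξ (v / v') : ℂ)) * f (g ξ, v') ∂ν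

/-- The twisted product `f₁ ⋆ f₂ = f₃` on functions on `G = Q ⋉ V`:
`f₃(q',v) = ∫_{Q×V} φ(q)(w−v) · conj(φ(q')(w−v)) · f₁(q',w) · f₂(q,v) · |q|⁻¹ dμQ(q) dμV(w)`. -/
noncomputable def twistedProd {Q V : Type*} [CommGroup V] [TopologicalSpace V]
    [MeasurableSpace Q] [MeasurableSpace V]
    (μQ : Measure Q) (μV : Measure V) (φ : Q → PontryaginDual V) (mod : Q → ℝ)
    (f₁ f₂ : Q × V → ℂ) : Q × V → ℂ :=
  fun x =>
    ∫ p : Q × V,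
      ((φ p.1 (p.2 / x.2) : ℂ)) * (starRingEnd ℂ) ((φ x.1 (p.2 / x.2) : ℂ)) *
        f₁ (x.1, p.2) * f₂ (p.1, x.2) * (((mod p.1)⁻¹ : ℝ) : ℂ) ∂(μQ.prod μV)

/-- In the dual orbit setup, for continuous compactly supported
`f₁, f₂ : Q × V → ℂ`, all the integrals defining the Kohn–Nirenberg kernels `K_{f₁}, K_{f₂}`,
the twisted product `f₃ = f₁ ⋆ f₂`, and the kernel composition converge absolutely, and
`∫_V K_{f₁}(v,w) K_{f₂}(w,v') dμV(w) = K_{f₃}(v,v')` for all `(v,v')`: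
the composition of Kohn–Nirenberg kernels is the kernel of the twisted product. -/
theorem knKer_comp_eq_knKer_twistedProd
    (Q : Type*) [Group Q] [TopologicalSpace Q] [IsTopologicalGroup Q] [LocallyCompactSpace Q]
    [SecondCountableTopology Q] [MeasurableSpace Q] [BorelSpace Q]
    (μQ : Measure Q) [μQ.IsHaarMeasure]
    (V : Type*) [CommGroup V] [TopologicalSpace V] [IsTopologicalGroup V]
    [LocallyCompactSpace V] [SecondCountableTopology V] [MeasurableSpace V] [BorelSpace V]
    (μV : Measure V) [μV.IsHaarMeasure]
    [MeasurableSpace (PontryaginDual V)] [BorelSpace (PontryaginDual V)]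
    (ν : Measure (PontryaginDual V)) [ν.IsHaarMeasure]
    -- the action of `Q` on `V` by topological automorphisms, and its moduli
    (ρ : Q →* MulAut V) (hρcont : ∀ q : Q, Continuous (ρ q))
    (mod : Q → ℝ) (hmodpos : ∀ q, 0 < mod q)
    (hmodmul : ∀ q q' : Q, mod (q * q') = mod q * mod q')
    (hscale : ∀ q : Q, μV.map (ρ q) = (ENNReal.ofReal (mod q))⁻¹ • μV)
    -- the dual orbit assumptions
    (ξ₀ : PontryaginDual V) (φ : Q → PontryaginDual V)
    (hφdef : ∀ (q : Q) (v : V), (φ q) v = ξ₀ ((ρ q)⁻¹ v))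
    (hφinj : Function.Injective φ) (hφmeas : Measurable φ)
    (hφconull : ν (Set.range φ)ᶜ = 0)
    (hν : (μQ.withDensity fun q => ENNReal.ofReal (mod q)⁻¹).map φ = ν)
    (g : PontryaginDual V → Q) (hg : Measurable g) (hgφ : ∀ q : Q, g (φ q) = q)
    -- the two continuous compactly supported functions
    (f₁ f₂ : Q × V → ℂ) (hf₁c : Continuous f₁) (hf₁s : HasCompactSupport f₁)
    (hf₂c : Continuous f₂) (hf₂s : HasCompactSupport f₂) :
    (∀ (f : Q × V → ℂ), Continuous f → HasCompactSupport f → ∀ v v' : V,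
        Integrable (fun ξ : PontryaginDual V => ((ξ (v / v') : ℂ)) * f (g ξ, v')) ν) ∧
    (∀ x : Q × V,
        Integrable
          (fun p : Q × V =>
            ((φ p.1 (p.2 / x.2) : ℂ)) * (starRingEnd ℂ) ((φ x.1 (p.2 / x.2) : ℂ)) *
              f₁ (x.1, p.2) * f₂ (p.1, x.2) * (((mod p.1)⁻¹ : ℝ) : ℂ))
          (μQ.prod μV)) ∧
    (∀ v v' : V,
        Integrable (fun w : V => knKer ν g f₁ v w * knKer ν g f₂ w v') μV) ∧
    ∀ v v' : V,
      (∫ w : V, knKer ν g f₁ v w * knKer ν g f₂ w v' ∂μV) =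
        knKer ν g (twistedProd μQ μV φ mod f₁ f₂) v v' := by
  classical
  haveI hSCdual : SecondCountableTopology (PontryaginDual V) :=
    (ContinuousMonoidHom.isEmbedding_toContinuousMap V Circle).secondCountableTopology
  haveI hνsf : SigmaFinite ν := by infer_instance
  set δ : Q → ℝ≥0∞ := fun q => ENNReal.ofReal (mod q)⁻¹ with hδdef
  have hmod1 : mod 1 = 1 := by
    have h := hmodmul 1 1
    rw [mul_one] at h
    nlinarith [hmodpos 1]
  have hmodinv : ∀ q, mod q⁻¹ = (mod q)⁻¹ := by
    intro q
    have h := hmodmul q q⁻¹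
    rw [mul_inv_cancel, hmod1] at h
    exact eq_inv_of_mul_eq_one_right h.symm
  have hδmul : ∀ q r : Q, δ (q * r) = δ q * δ r := by
    intro q r
    simp only [hδdef, hmodmul, mul_inv]
    rw [ENNReal.ofReal_mul (inv_nonneg.mpr (hmodpos q).le)]
  have hδtop : ∀ q, δ q ≠ ⊤ := fun q => ENNReal.ofReal_ne_top
  have hδinv : ∀ q, δ q⁻¹ = (δ q)⁻¹ := by
    intro q
    show ENNReal.ofReal (mod q⁻¹)⁻¹ = (ENNReal.ofReal (mod q)⁻¹)⁻¹
    rw [hmodinv, inv_inv, ← ENNReal.ofReal_inv_of_pos (inv_pos.mpr (hmodpos q)), inv_inv]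
  set m : Measure Q := μQ.withDensity δ with hmdef
  have hm_eq : ν.map g = m := by
    rw [← hν, Measure.map_map hg hφmeas]
    have h : g ∘ φ = id := funext hgφ
    rw [h, Measure.map_id]
  have hmB : ∀ B : Set Q, MeasurableSet B → m B = ν (g ⁻¹' B) := by
    intro B hB; rw [← hm_eq, Measure.map_apply hg hB]
  have key : ∀ (q : Q) (B : Set Q), MeasurableSet B →
      m ((fun x => q * x) ⁻¹' B) = δ q⁻¹ * m B := by
    intro q B hB
    have hS : MeasurableSet ((fun x => q * x) ⁻¹' B) := (measurable_const_mul q) hB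
    have e : Q ≃ᵐ Q := (Homeomorph.mulLeft q⁻¹).toMeasurableEquiv
    rw [hmdef, withDensity_apply δ hS, withDensity_apply δ hB]
    rw [← lintegral_indicator hS δ, ← lintegral_indicator hB δ]
    have h1 : μQ.map (⇑((Homeomorph.mulLeft q⁻¹).toMeasurableEquiv)) = μQ := by
      have : ⇑((Homeomorph.mulLeft q⁻¹).toMeasurableEquiv) = (fun y => q⁻¹ * y) := rfl
      rw [this]
      exact MeasureTheory.map_mul_left_eq_self μQ q⁻¹
    calc ∫⁻ x, ((fun x => q * x) ⁻¹' B).indicator δ x ∂μQ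
        = ∫⁻ x, ((fun x => q * x) ⁻¹' B).indicator δ x
            ∂(μQ.map (⇑((Homeomorph.mulLeft q⁻¹).toMeasurableEquiv))) := by rw [h1]
      _ = ∫⁻ y, ((fun x => q * x) ⁻¹' B).indicator δ
            ((Homeomorph.mulLeft q⁻¹).toMeasurableEquiv y) ∂μQ :=
          MeasureTheory.lintegral_map_equiv _ _
      _ = ∫⁻ y, δ q⁻¹ * B.indicator δ y ∂μQ := by
          congr 1
          funext y
          have hmem : (q⁻¹ * y ∈ (fun x => q * x) ⁻¹' B) ↔ y ∈ B := by
            simp [Set.mem_preimage]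
          by_cases hy : y ∈ B
          · rw [Set.indicator_of_mem (by simpa [hmem] using hy), Set.indicator_of_mem hy]
            show δ (q⁻¹ * y) = δ q⁻¹ * δ y
            exact hδmul q⁻¹ y
          · rw [Set.indicator_of_notMem (by simpa [hmem] using hy), Set.indicator_of_notMem hy]
            simp
      _ = δ q⁻¹ * ∫⁻ y, B.indicator δ y ∂μQ := lintegral_const_mul' _ _ (hδtop q⁻¹)
  -- B₀
  obtain ⟨C₀, hC₀comp, hC₀mem⟩ := exists_compact_mem_nhds (1 : PontryaginDual V)
  have hC₀meas : MeasurableSet C₀ := hC₀comp.isClosed.measurableSet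
  set B₀ : Set Q := φ ⁻¹' C₀ with hB₀
  have hB₀meas : MeasurableSet B₀ := hφmeas hC₀meas
  have hrange : ∀ S : Set (PontryaginDual V), ν S = ν (S ∩ Set.range φ) := by
    intro S
    apply le_antisymm
    · calc ν S ≤ ν (S ∩ Set.range φ ∪ (Set.range φ)ᶜ) := measure_mono (by
            intro x hx
            by_cases h : x ∈ Set.range φ
            exacts [Or.inl ⟨hx, h⟩, Or.inr h])
        _ ≤ ν (S ∩ Set.range φ) + ν (Set.range φ)ᶜ := measure_union_le _ _
        _ = ν (S ∩ Set.range φ) := by rw [hφconull, add_zero]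
    · exact measure_mono Set.inter_subset_left
  have hgφset : g ⁻¹' B₀ ∩ Set.range φ = C₀ ∩ Set.range φ := by
    ext ξ
    constructor
    · rintro ⟨hξ, q, rfl⟩
      exact ⟨by simpa [hB₀, hgφ q] using hξ, ⟨q, rfl⟩⟩
    · rintro ⟨hξ, q, rfl⟩
      refine ⟨?_, ⟨q, rfl⟩⟩
      simpa [hB₀, hgφ q] using hξ
  have hmB₀ : m B₀ = ν C₀ := by
    rw [hmB _ hB₀meas, hrange (g ⁻¹' B₀), hgφset, ← hrange C₀]
  have hmB₀pos : 0 < m B₀ := by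
    rw [hmB₀]
    obtain ⟨U, hUsub, hUopen, hU1⟩ := mem_nhds_iff.mp hC₀mem
    exact lt_of_lt_of_le (hUopen.measure_pos ν ⟨1, hU1⟩) (measure_mono hUsub)
  have hmB₀top : m B₀ < ⊤ := by rw [hmB₀]; exact hC₀comp.measure_lt_top
  haveI : SFinite m := by rw [hmdef]; infer_instance
  have hsect : Measurable fun q : Q => m ((fun x => q⁻¹ * x) ⁻¹' B₀) := by
    have hs : MeasurableSet {p : Q × Q | p.1⁻¹ * p.2 ∈ B₀} :=
      (measurable_fst.inv.mul measurable_snd) hB₀meas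
    have h := measurable_measure_prodMk_left (ν := m) hs
    exact h
  have hδeq : ∀ q, δ q = m ((fun x => q⁻¹ * x) ⁻¹' B₀) * (m B₀)⁻¹ := by
    intro q
    rw [key q⁻¹ B₀ hB₀meas, inv_inv, mul_assoc,
      ENNReal.mul_inv_cancel hmB₀pos.ne' hmB₀top.ne, mul_one]
  have hδmeas : Measurable δ := by
    rw [show δ = fun q => m ((fun x => q⁻¹ * x) ⁻¹' B₀) * (m B₀)⁻¹ from funext hδeq]
    exact hsect.mul_const _
  have hmodmeas : Measurable mod := by
    have h : mod = fun q => ((δ q).toReal)⁻¹ := by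
      funext q
      rw [hδdef]
      rw [ENNReal.toReal_ofReal (inv_nonneg.mpr (hmodpos q).le), inv_inv]
    rw [h]
    exact hδmeas.ennreal_toReal.inv
  have hloc : ∀ L : Set Q, IsCompact L → ∃ c : ℝ, 0 < c ∧ ∀ q ∈ L, (mod q)⁻¹ ≤ c := by
    intro L hL
    obtain ⟨K₀, hK₀comp, hK₀mem⟩ := exists_compact_mem_nhds (1 : Q)
    have hKcomp : IsCompact (closure K₀) := hK₀comp.closure
    have hKmeas : MeasurableSet (closure K₀) := isClosed_closure.measurableSet
    have hKpos : 0 < μQ (closure K₀) := by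
      obtain ⟨U, hUsub, hUopen, hU1⟩ := mem_nhds_iff.mp hK₀mem
      exact lt_of_lt_of_le (hUopen.measure_pos μQ ⟨1, hU1⟩)
        (measure_mono (hUsub.trans subset_closure))
    set E : ℕ → Set Q := fun n => {x ∈ closure K₀ | mod x ≤ n + 1 ∧ (mod x)⁻¹ ≤ n + 1} with hE
    have hEmeas : ∀ n, MeasurableSet (E n) := by
      intro n
      apply hKmeas.inter
      exact (hmodmeas measurableSet_Iic).inter (hmodmeas.inv measurableSet_Iic)
    have hEcover : closure K₀ ⊆ ⋃ n, E n := by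
      intro x hx
      obtain ⟨n, hn⟩ := exists_nat_ge (max (mod x) (mod x)⁻¹)
      refine Set.mem_iUnion.mpr ⟨n, hx, ?_, ?_⟩
      · have := le_max_left (mod x) (mod x)⁻¹
        linarith
      · have := le_max_right (mod x) (mod x)⁻¹
        linarith
    obtain ⟨n, hn⟩ : ∃ n, 0 < μQ (E n) := by
      by_contra h
      push_neg at h
      have h0 : μQ (⋃ n, E n) = 0 :=
        measure_iUnion_null fun n => le_antisymm (h n) (zero_le)
      exact hKpos.ne' (measure_mono_null hEcover h0)
    have hU : E n / E n ∈ nhds (1 : Q) := MeasureTheory.Measure.div_mem_nhds_one_of_haar_pos μQ (E n) (hEmeas n) hn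
    have hc₀pos : (0:ℝ) < ((n:ℝ)+1)^2 := by positivity
    have hUbound : ∀ u ∈ E n / E n, (mod u)⁻¹ ≤ ((n:ℝ)+1)^2 := by
      intro u hu
      obtain ⟨x, hx, y, hy, rfl⟩ := hu
      have h1 : (mod (x / y))⁻¹ = (mod x)⁻¹ * mod y := by
        rw [div_eq_mul_inv, hmodmul, hmodinv, mul_inv, inv_inv]
      rw [h1, sq]
      exact mul_le_mul hx.2.2 hy.2.1 (hmodpos y).le (by positivity)
    have hnhds : ∀ q : Q, {x | q⁻¹ * x ∈ E n / E n} ∈ nhds q := by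
      intro q
      have hco : ContinuousAt (fun x : Q => q⁻¹ * x) q :=
        (continuous_const.mul continuous_id).continuousAt
      have := hco.preimage_mem_nhds (by simpa using hU)
      exact this
    obtain ⟨t, htL, htcover⟩ :=
      hL.elim_nhds_subcover (fun q => {x | q⁻¹ * x ∈ E n / E n}) (fun q _ => hnhds q)
    have hsum0 : (0:ℝ) ≤ ∑ i ∈ t, (mod i)⁻¹ :=
      Finset.sum_nonneg fun i _ => inv_nonneg.mpr (hmodpos i).le
    refine ⟨((n:ℝ)+1)^2 * (∑ i ∈ t, (mod i)⁻¹) + 1, by nlinarith, ?_⟩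
    intro q hq
    obtain ⟨i, hit, hqi⟩ := Set.mem_iUnion₂.mp (htcover hq)
    have hu : i⁻¹ * q ∈ E n / E n := hqi
    have hqd : (mod q)⁻¹ = (mod i)⁻¹ * (mod (i⁻¹ * q))⁻¹ := by
      rw [← mul_inv, ← hmodmul, mul_inv_cancel_left]
    rw [hqd]
    have h2 : (mod i)⁻¹ * (mod (i⁻¹ * q))⁻¹ ≤ (mod i)⁻¹ * ((n:ℝ)+1)^2 :=
      mul_le_mul_of_nonneg_left (hUbound _ hu) (inv_nonneg.mpr (hmodpos i).le)
    have h3 : (mod i)⁻¹ ≤ ∑ j ∈ t, (mod j)⁻¹ :=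
      Finset.single_le_sum (fun j _ => inv_nonneg.mpr (hmodpos j).le) hit
    nlinarith
  -- evaluation continuity / joint measurability of the pairing
  haveI hevalconstI : ContinuousEvalConst (PontryaginDual V) V Circle :=
    ContinuousMonoidHom.instContinuousEvalConst V Circle
  haveI hevalI : ContinuousEval (PontryaginDual V) V Circle :=
    ContinuousMonoidHom.instContinuousEval V Circle
  have hpair : Measurable fun p : Q × V => ((φ p.1 p.2 : ℂ)) := by
    have hev : Continuous fun p : PontryaginDual V × V => ((p.1 p.2 : ℂ)) :=
      continuous_induced_dom.comp (ContinuousEval.continuous_eval (F := PontryaginDual V))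
    exact hev.measurable.comp ((hφmeas.comp measurable_fst).prodMk measurable_snd)
  have hevconst : ∀ u : V, Continuous fun ξ : PontryaginDual V => ((ξ u : ℂ)) := fun u =>
    continuous_induced_dom.comp (continuous_eval_const u)
  have hf₁m : Measurable f₁ := hf₁c.measurable
  have hf₂m : Measurable f₂ := hf₂c.measurable
  -- sup-norm bounds
  obtain ⟨M₁, hM₁⟩ := hf₁s.exists_bound_of_continuous hf₁c
  obtain ⟨M₂, hM₂⟩ := hf₂s.exists_bound_of_continuous hf₂c
  have hM₁0 : 0 ≤ M₁ := le_trans (norm_nonneg _) (hM₁ (1, 1))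
  have hM₂0 : 0 ≤ M₂ := le_trans (norm_nonneg _) (hM₂ (1, 1))
  -- support sets
  set KQ₁ : Set Q := closure (Prod.fst '' tsupport f₁) with hKQ₁def
  set KV₁ : Set V := closure (Prod.snd '' tsupport f₁) with hKV₁def
  set KQ₂ : Set Q := closure (Prod.fst '' tsupport f₂) with hKQ₂def
  have hKQ₁c : IsCompact KQ₁ := (hf₁s.image continuous_fst).closure
  have hKV₁c : IsCompact KV₁ := (hf₁s.image continuous_snd).closure
  have hKQ₂c : IsCompact KQ₂ := (hf₂s.image continuous_fst).closure
  have hKQ₁meas : MeasurableSet KQ₁ := isClosed_closure.measurableSet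
  have hKV₁meas : MeasurableSet KV₁ := isClosed_closure.measurableSet
  have hKQ₂meas : MeasurableSet KQ₂ := isClosed_closure.measurableSet
  have hsupp₁ : ∀ p : Q × V, f₁ p ≠ 0 → p.1 ∈ KQ₁ ∧ p.2 ∈ KV₁ := by
    intro p hp
    have hps : p ∈ tsupport f₁ := subset_tsupport _ (Function.mem_support.mpr hp)
    exact ⟨subset_closure ⟨p, hps, rfl⟩, subset_closure ⟨p, hps, rfl⟩⟩
  have hsupp₂ : ∀ p : Q × V, f₂ p ≠ 0 → p.1 ∈ KQ₂ := by
    intro p hp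
    have hps : p ∈ tsupport f₂ := subset_tsupport _ (Function.mem_support.mpr hp)
    exact subset_closure ⟨p, hps, rfl⟩
  obtain ⟨c₁, hc₁pos, hc₁⟩ := hloc KQ₁ hKQ₁c
  obtain ⟨c₂, hc₂pos, hc₂⟩ := hloc KQ₂ hKQ₂c
  -- m is finite on closed compacts
  have hmfin : ∀ L : Set Q, IsCompact L → IsClosed L → m L < ⊤ := by
    intro L hLc hLcl
    obtain ⟨c, hcpos, hc⟩ := hloc L hLc
    rw [hmdef, withDensity_apply δ hLcl.measurableSet]
    calc ∫⁻ x in L, δ x ∂μQ ≤ ∫⁻ _ in L, ENNReal.ofReal c ∂μQ := by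
          refine setLIntegral_mono measurable_const fun x hx => ?_
          exact ENNReal.ofReal_le_ofReal (hc x hx)
      _ = ENNReal.ofReal c * μQ L := by rw [setLIntegral_const L _]
      _ < ⊤ := ENNReal.mul_lt_top ENNReal.ofReal_lt_top hLc.measure_lt_top
  -- norms of circle values
  have hnorm1 : ∀ (ξ : PontryaginDual V) (u : V), ‖((ξ u : ℂ))‖ = 1 := by
    intro ξ u; exact Circle.norm_coe _
  -- a.e. strong measurability of the kernel integrand
  have hAESMν : ∀ (f : Q × V → ℂ), Measurable f → ∀ u b : V,
      AEStronglyMeasurable (fun ξ : PontryaginDual V => ((ξ u : ℂ)) * f (g ξ, b)) ν := by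
    intro f hf u b
    apply Measurable.aestronglyMeasurable
    exact ((hevconst u).measurable).mul (hf.comp (hg.prodMk measurable_const))
  -- the density factor as a complex number
  set dC : Q → ℂ := fun q => (((mod q)⁻¹ : ℝ) : ℂ) with hdCdef
  have hdCmeas : Measurable dC := Complex.measurable_ofReal.comp hmodmeas.inv
  have hdCnorm : ∀ q, ‖dC q‖ = (mod q)⁻¹ := by
    intro q
    rw [hdCdef]
    rw [Complex.norm_real, Real.norm_eq_abs, abs_of_nonneg (inv_nonneg.mpr (hmodpos q).le)]
  -- main rewriting of the kernel as a weighted integral over Q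
  have hK : ∀ (f : Q × V → ℂ), Measurable f → ∀ u b : V,
      (∫ ξ : PontryaginDual V, ((ξ u : ℂ)) * f (g ξ, b) ∂ν)
        = ∫ q, dC q * ((φ q u : ℂ)) * f (q, b) ∂μQ := by
    intro f hf u b
    rw [← hν]
    rw [MeasureTheory.integral_map hφmeas.aemeasurable (by rw [hν]; exact hAESMν f hf u b)]
    simp only [hgφ]
    rw [hmdef]
    have hw : Measurable fun q => ((mod q)⁻¹).toNNReal := hmodmeas.inv.real_toNNReal
    have hmd : μQ.withDensity δ
        = μQ.withDensity (fun q => ((((mod q)⁻¹).toNNReal : ℝ≥0) : ℝ≥0∞)) := rfl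
    rw [hmd, integral_withDensity_eq_integral_smul hw]
    congr 1
    funext q
    rw [NNReal.smul_def, Complex.real_smul, Real.coe_toNNReal _ (inv_nonneg.mpr (hmodpos q).le)]
    rw [hdCdef]
    ring
  have hKer : ∀ (f : Q × V → ℂ), Measurable f → ∀ a b : V,
      knKer ν g f a b = ∫ q, dC q * ((φ q (a / b) : ℂ)) * f (q, b) ∂μQ := by
    intro f hf a b
    simp only [knKer]
    exact hK f hf (a / b) b
  -- Bullet 1
  have hb1 : ∀ (f : Q × V → ℂ), Continuous f → HasCompactSupport f → ∀ v v' : V,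
      Integrable (fun ξ : PontryaginDual V => ((ξ (v / v') : ℂ)) * f (g ξ, v')) ν := by
    intro f hfc hfs v v'
    obtain ⟨Mf, hMf⟩ := hfs.exists_bound_of_continuous hfc
    have hKfc : IsCompact (closure (Prod.fst '' tsupport f)) :=
      (hfs.image continuous_fst).closure
    have hKfmeas : MeasurableSet (closure (Prod.fst '' tsupport f)) :=
      isClosed_closure.measurableSet
    refine integrable_of_bound_support' ν _ (hAESMν f hfc.measurable (v / v') v') Mf
      (g ⁻¹' closure (Prod.fst '' tsupport f)) (hg hKfmeas) ?_ ?_ ?_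
    · rw [← hmB _ hKfmeas]
      exact hmfin _ hKfc isClosed_closure
    · intro ξ _
      rw [norm_mul, hnorm1, one_mul]
      exact hMf _
    · intro ξ hξ
      have hf0 : f (g ξ, v') ≠ 0 := by
        intro h0; exact hξ (by rw [h0, mul_zero])
      exact subset_closure ⟨(g ξ, v'), subset_tsupport _ (Function.mem_support.mpr hf0), rfl⟩
  -- Bullet 2
  have hb2 : ∀ x : Q × V,
      Integrable
        (fun p : Q × V =>
          ((φ p.1 (p.2 / x.2) : ℂ)) * (starRingEnd ℂ) ((φ x.1 (p.2 / x.2) : ℂ)) *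
            f₁ (x.1, p.2) * f₂ (p.1, x.2) * (((mod p.1)⁻¹ : ℝ) : ℂ))
        (μQ.prod μV) := by
    intro x
    refine integrable_of_bound_support' _ _ ?_ (M₁ * M₂ * c₂) (KQ₂ ×ˢ KV₁)
      (hKQ₂meas.prod hKV₁meas) ?_ ?_ ?_
    · apply Measurable.aestronglyMeasurable
      refine ((((hpair.comp (measurable_fst.prodMk (measurable_snd.div measurable_const))).mul
        ?_).mul ?_).mul ?_).mul ?_
      · exact continuous_star.measurable.comp
          (hpair.comp (measurable_const.prodMk (measurable_snd.div measurable_const)))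
      · exact hf₁m.comp (measurable_const.prodMk measurable_snd)
      · exact hf₂m.comp (measurable_fst.prodMk measurable_const)
      · exact Complex.measurable_ofReal.comp ((hmodmeas.comp measurable_fst).inv)
    · rw [Measure.prod_prod]
      exact ENNReal.mul_lt_top hKQ₂c.measure_lt_top hKV₁c.measure_lt_top
    · rintro p ⟨hp1, hp2⟩
      have h2 : ‖(starRingEnd ℂ) ((φ x.1 (p.2 / x.2) : ℂ))‖ = 1 := by
        rw [RCLike.norm_conj]; exact hnorm1 _ _
      simp only [norm_mul, hnorm1, h2, one_mul, mul_one]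
      have h5 : ‖(((mod p.1)⁻¹ : ℝ) : ℂ)‖ ≤ c₂ := by
        rw [Complex.norm_real, Real.norm_eq_abs, abs_of_nonneg (inv_nonneg.mpr (hmodpos p.1).le)]
        exact hc₂ p.1 hp1
      refine mul_le_mul (mul_le_mul (hM₁ _) (hM₂ _) (norm_nonneg _) hM₁0) h5 (norm_nonneg _)
        (mul_nonneg hM₁0 hM₂0)
    · intro p hp
      have h4 : f₂ (p.1, x.2) ≠ 0 := fun h => hp (by rw [h]; ring)
      have h3 : f₁ (x.1, p.2) ≠ 0 := fun h => hp (by rw [h]; ring)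
      exact Set.mem_prod.mpr ⟨hsupp₂ (p.1, x.2) h4, (hsupp₁ (x.1, p.2) h3).2⟩
  -- integrability and bounds for the Q-integrands of the kernels
  have hXint : ∀ v w : V, Integrable (fun q => dC q * ((φ q (v / w) : ℂ)) * f₁ (q, w)) μQ := by
    intro v w
    refine integrable_of_bound_support' μQ _ ?_ (c₁ * M₁) KQ₁ hKQ₁meas hKQ₁c.measure_lt_top ?_ ?_
    · exact ((hdCmeas.mul (hpair.comp (measurable_id.prodMk measurable_const))).mul
        (hf₁m.comp (measurable_id.prodMk measurable_const))).aestronglyMeasurable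
    · intro q hq
      simp only [norm_mul, hnorm1, mul_one]
      refine mul_le_mul ?_ (hM₁ _) (norm_nonneg _) hc₁pos.le
      rw [hdCnorm]
      exact hc₁ q hq
    · intro q hq
      have h0 : f₁ (q, w) ≠ 0 := fun h => hq (by rw [h, mul_zero])
      exact (hsupp₁ (q, w) h0).1
  have hYint : ∀ w v' : V, Integrable (fun q => dC q * ((φ q (w / v') : ℂ)) * f₂ (q, v')) μQ := by
    intro w v'
    refine integrable_of_bound_support' μQ _ ?_ (c₂ * M₂) KQ₂ hKQ₂meas hKQ₂c.measure_lt_top ?_ ?_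
    · exact ((hdCmeas.mul (hpair.comp (measurable_id.prodMk measurable_const))).mul
        (hf₂m.comp (measurable_id.prodMk measurable_const))).aestronglyMeasurable
    · intro q hq
      simp only [norm_mul, hnorm1, mul_one]
      refine mul_le_mul ?_ (hM₂ _) (norm_nonneg _) hc₂pos.le
      rw [hdCnorm]
      exact hc₂ q hq
    · intro q hq
      have h0 : f₂ (q, v') ≠ 0 := fun h => hq (by rw [h, mul_zero])
      exact hsupp₂ (q, v') h0
  have hXbd : ∀ v w : V,
      ‖∫ q, dC q * ((φ q (v / w) : ℂ)) * f₁ (q, w) ∂μQ‖ ≤ c₁ * M₁ * (μQ KQ₁).toReal := by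
    intro v w
    have hind : Integrable (KQ₁.indicator fun _ => c₁ * M₁) μQ := by
      rw [integrable_indicator_iff hKQ₁meas]
      exact integrableOn_const hKQ₁c.measure_lt_top.ne
    calc ‖∫ q, dC q * ((φ q (v / w) : ℂ)) * f₁ (q, w) ∂μQ‖
        ≤ ∫ q, ‖dC q * ((φ q (v / w) : ℂ)) * f₁ (q, w)‖ ∂μQ := norm_integral_le_integral_norm _
      _ ≤ ∫ q, KQ₁.indicator (fun _ => c₁ * M₁) q ∂μQ := by
          refine integral_mono (hXint v w).norm hind fun q => ?_
          by_cases hq : q ∈ KQ₁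
          · rw [Set.indicator_of_mem hq]
            simp only [norm_mul, hnorm1, mul_one]
            refine mul_le_mul ?_ (hM₁ _) (norm_nonneg _) hc₁pos.le
            rw [hdCnorm]
            exact hc₁ q hq
          · rw [Set.indicator_of_notMem hq]
            have h0 : f₁ (q, w) = 0 := by
              by_contra hne; exact hq (hsupp₁ (q, w) hne).1
            simp [h0]
      _ = (μQ KQ₁).toReal • (c₁ * M₁) := integral_indicator_const _ hKQ₁meas
      _ = c₁ * M₁ * (μQ KQ₁).toReal := by rw [smul_eq_mul]; ring
  have hYbd : ∀ w v' : V,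
      ‖∫ q, dC q * ((φ q (w / v') : ℂ)) * f₂ (q, v') ∂μQ‖ ≤ c₂ * M₂ * (μQ KQ₂).toReal := by
    intro w v'
    have hind : Integrable (KQ₂.indicator fun _ => c₂ * M₂) μQ := by
      rw [integrable_indicator_iff hKQ₂meas]
      exact integrableOn_const hKQ₂c.measure_lt_top.ne
    calc ‖∫ q, dC q * ((φ q (w / v') : ℂ)) * f₂ (q, v') ∂μQ‖
        ≤ ∫ q, ‖dC q * ((φ q (w / v') : ℂ)) * f₂ (q, v')‖ ∂μQ := norm_integral_le_integral_norm _
      _ ≤ ∫ q, KQ₂.indicator (fun _ => c₂ * M₂) q ∂μQ := by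
          refine integral_mono (hYint w v').norm hind fun q => ?_
          by_cases hq : q ∈ KQ₂
          · rw [Set.indicator_of_mem hq]
            simp only [norm_mul, hnorm1, mul_one]
            refine mul_le_mul ?_ (hM₂ _) (norm_nonneg _) hc₂pos.le
            rw [hdCnorm]
            exact hc₂ q hq
          · rw [Set.indicator_of_notMem hq]
            have h0 : f₂ (q, v') = 0 := by
              by_contra hne; exact hq (hsupp₂ (q, v') hne)
            simp [h0]
      _ = (μQ KQ₂).toReal • (c₂ * M₂) := integral_indicator_const _ hKQ₂meas
      _ = c₂ * M₂ * (μQ KQ₂).toReal := by rw [smul_eq_mul]; ring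
  -- strong measurability of the kernels
  have hSM₁ : ∀ v : V,
      StronglyMeasurable fun w => ∫ q, dC q * ((φ q (v / w) : ℂ)) * f₁ (q, w) ∂μQ := by
    intro v
    apply StronglyMeasurable.integral_prod_right
      (f := fun w q => dC q * ((φ q (v / w) : ℂ)) * f₁ (q, w))
    apply Measurable.stronglyMeasurable
    exact (((hdCmeas.comp measurable_snd).mul
      (hpair.comp (measurable_snd.prodMk (measurable_const.div measurable_fst)))).mul
      (hf₁m.comp (measurable_snd.prodMk measurable_fst)))
  have hSM₂ : ∀ v' : V,
      StronglyMeasurable fun w => ∫ q, dC q * ((φ q (w / v') : ℂ)) * f₂ (q, v') ∂μQ := by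
    intro v'
    apply StronglyMeasurable.integral_prod_right
      (f := fun w q => dC q * ((φ q (w / v') : ℂ)) * f₂ (q, v'))
    apply Measurable.stronglyMeasurable
    exact (((hdCmeas.comp measurable_snd).mul
      (hpair.comp (measurable_snd.prodMk (measurable_fst.div measurable_const)))).mul
      (hf₂m.comp (measurable_snd.prodMk measurable_const)))
  -- Bullet 3
  have hb3 : ∀ v v' : V, Integrable (fun w => knKer ν g f₁ v w * knKer ν g f₂ w v') μV := by
    intro v v'
    have hrw : (fun w => knKer ν g f₁ v w * knKer ν g f₂ w v')
        = fun w => (∫ q, dC q * ((φ q (v / w) : ℂ)) * f₁ (q, w) ∂μQ) *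
            (∫ q, dC q * ((φ q (w / v') : ℂ)) * f₂ (q, v') ∂μQ) := by
      funext w; rw [hKer f₁ hf₁m v w, hKer f₂ hf₂m w v']
    rw [hrw]
    refine integrable_of_bound_support' μV _ (((hSM₁ v).mul (hSM₂ v')).aestronglyMeasurable)
      ((c₁ * M₁ * (μQ KQ₁).toReal) * (c₂ * M₂ * (μQ KQ₂).toReal)) KV₁ hKV₁meas
      hKV₁c.measure_lt_top ?_ ?_
    · intro w _
      rw [norm_mul]
      have h10 : (0:ℝ) ≤ c₁ * M₁ * (μQ KQ₁).toReal :=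
        mul_nonneg (mul_nonneg hc₁pos.le hM₁0) ENNReal.toReal_nonneg
      exact mul_le_mul (hXbd v w) (hYbd w v') (norm_nonneg _) h10
    · intro w hw
      by_contra hwn
      apply hw
      have h0 : ∀ q, f₁ (q, w) = 0 := fun q => by
        by_contra hne; exact hwn (hsupp₁ (q, w) hne).2
      have hz : (∫ q, dC q * ((φ q (v / w) : ℂ)) * f₁ (q, w) ∂μQ) = 0 := by
        have he : (fun q => dC q * ((φ q (v / w) : ℂ)) * f₁ (q, w)) = fun _ => (0:ℂ) := by
          funext q; rw [h0 q, mul_zero]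
        rw [he, integral_zero]
      rw [hz, zero_mul]
  -- character identity
  have hchar : ∀ (ξ : PontryaginDual V) (a b : V),
      ((ξ a : ℂ)) * (starRingEnd ℂ) ((ξ b : ℂ)) = ((ξ (a / b) : ℂ)) := by
    intro ξ a b
    rw [← Circle.coe_inv_eq_conj, ← Circle.coe_mul, ← map_inv, ← map_mul, ← div_eq_mul_inv]
  -- measurability of the twisted product
  have hf₃m : Measurable (twistedProd μQ μV φ mod f₁ f₂) := by
    have hΨm : Measurable fun z : (Q × V) × (Q × V) =>
        ((φ z.2.1 (z.2.2 / z.1.2) : ℂ)) * (starRingEnd ℂ) ((φ z.1.1 (z.2.2 / z.1.2) : ℂ)) *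
          f₁ (z.1.1, z.2.2) * f₂ (z.2.1, z.1.2) * (((mod z.2.1)⁻¹ : ℝ) : ℂ) := by
      refine ((((hpair.comp ((measurable_snd.fst).prodMk
          ((measurable_snd.snd).div (measurable_fst.snd)))).mul
        (continuous_star.measurable.comp (hpair.comp ((measurable_fst.fst).prodMk
          ((measurable_snd.snd).div (measurable_fst.snd)))))).mul
        (hf₁m.comp ((measurable_fst.fst).prodMk (measurable_snd.snd)))).mul
        (hf₂m.comp ((measurable_snd.fst).prodMk (measurable_fst.snd)))).mul
        (Complex.measurable_ofReal.comp ((hmodmeas.comp measurable_snd.fst).inv))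
    have hsm : StronglyMeasurable fun x : Q × V => ∫ p : Q × V,
        ((φ p.1 (p.2 / x.2) : ℂ)) * (starRingEnd ℂ) ((φ x.1 (p.2 / x.2) : ℂ)) *
          f₁ (x.1, p.2) * f₂ (p.1, x.2) * (((mod p.1)⁻¹ : ℝ) : ℂ) ∂(μQ.prod μV) := by
      apply StronglyMeasurable.integral_prod_right
        (f := fun (x : Q × V) (p : Q × V) =>
          ((φ p.1 (p.2 / x.2) : ℂ)) * (starRingEnd ℂ) ((φ x.1 (p.2 / x.2) : ℂ)) *
            f₁ (x.1, p.2) * f₂ (p.1, x.2) * (((mod p.1)⁻¹ : ℝ) : ℂ))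
      exact hΨm.stronglyMeasurable
    exact hsm.measurable
  refine ⟨hb1, hb2, hb3, ?_⟩
  -- Bullet 4
  intro v v'
  set Φ : Q × (Q × V) → ℂ := fun r =>
    dC r.1 * dC r.2.1 * ((φ r.1 (v / r.2.2) : ℂ)) * ((φ r.2.1 (r.2.2 / v') : ℂ)) *
      f₁ (r.1, r.2.2) * f₂ (r.2.1, v') with hΦdef
  have hΦmeas : Measurable Φ := by
    refine (((((hdCmeas.comp measurable_fst).mul (hdCmeas.comp measurable_snd.fst)).mul
      (hpair.comp (measurable_fst.prodMk (measurable_const.div measurable_snd.snd)))).mul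
      (hpair.comp (measurable_snd.fst.prodMk (measurable_snd.snd.div measurable_const)))).mul
      (hf₁m.comp (measurable_fst.prodMk measurable_snd.snd))).mul
      (hf₂m.comp (measurable_snd.fst.prodMk measurable_const))
  have hΦb : ∀ r ∈ KQ₁ ×ˢ (KQ₂ ×ˢ KV₁), ‖Φ r‖ ≤ c₁ * c₂ * M₁ * M₂ := by
    rintro r ⟨hr1, hr2, _⟩
    simp only [hΦdef, norm_mul, hnorm1, mul_one]
    have e1 : ‖dC r.1‖ ≤ c₁ := by rw [hdCnorm]; exact hc₁ _ hr1
    have e2 : ‖dC r.2.1‖ ≤ c₂ := by rw [hdCnorm]; exact hc₂ _ hr2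
    exact mul_le_mul (mul_le_mul (mul_le_mul e1 e2 (norm_nonneg _) hc₁pos.le)
      (hM₁ _) (norm_nonneg _) (mul_nonneg hc₁pos.le hc₂pos.le))
      (hM₂ _) (norm_nonneg _) (mul_nonneg (mul_nonneg hc₁pos.le hc₂pos.le) hM₁0)
  have hΦsupp : ∀ r, Φ r ≠ 0 → r ∈ KQ₁ ×ˢ (KQ₂ ×ˢ KV₁) := by
    intro r hr
    have h1 : f₁ (r.1, r.2.2) ≠ 0 := fun h => hr (by simp only [hΦdef]; rw [h]; ring)
    have h2 : f₂ (r.2.1, v') ≠ 0 := fun h => hr (by simp only [hΦdef]; rw [h]; ring)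
    exact Set.mem_prod.mpr ⟨(hsupp₁ (r.1, r.2.2) h1).1,
      Set.mem_prod.mpr ⟨hsupp₂ (r.2.1, v') h2, (hsupp₁ (r.1, r.2.2) h1).2⟩⟩
  have hΦint : Integrable Φ (μQ.prod (μQ.prod μV)) := by
    refine integrable_of_bound_support' _ _ hΦmeas.aestronglyMeasurable (c₁ * c₂ * M₁ * M₂)
      (KQ₁ ×ˢ (KQ₂ ×ˢ KV₁)) (hKQ₁meas.prod (hKQ₂meas.prod hKV₁meas)) ?_ hΦb hΦsupp
    rw [Measure.prod_prod, Measure.prod_prod]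
    exact ENNReal.mul_lt_top hKQ₁c.measure_lt_top
      (ENNReal.mul_lt_top hKQ₂c.measure_lt_top hKV₁c.measure_lt_top)
  have hΦintQQ : ∀ w : V, Integrable (fun z : Q × Q => Φ (z.2, (z.1, w))) (μQ.prod μQ) := by
    intro w
    refine integrable_of_bound_support' _ _ ?_ (c₁ * c₂ * M₁ * M₂) (KQ₂ ×ˢ KQ₁)
      (hKQ₂meas.prod hKQ₁meas) ?_ ?_ ?_
    · exact (hΦmeas.comp (measurable_snd.prodMk
        (measurable_fst.prodMk measurable_const))).aestronglyMeasurable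
    · rw [Measure.prod_prod]
      exact ENNReal.mul_lt_top hKQ₂c.measure_lt_top hKQ₁c.measure_lt_top
    · rintro z ⟨hz1, hz2⟩
      simp only [hΦdef, norm_mul, hnorm1, mul_one]
      have e1 : ‖dC z.2‖ ≤ c₁ := by rw [hdCnorm]; exact hc₁ _ hz2
      have e2 : ‖dC z.1‖ ≤ c₂ := by rw [hdCnorm]; exact hc₂ _ hz1
      exact mul_le_mul (mul_le_mul (mul_le_mul e1 e2 (norm_nonneg _) hc₁pos.le)
        (hM₁ _) (norm_nonneg _) (mul_nonneg hc₁pos.le hc₂pos.le))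
        (hM₂ _) (norm_nonneg _) (mul_nonneg (mul_nonneg hc₁pos.le hc₂pos.le) hM₁0)
    · intro z hz
      have h1 : f₁ (z.2, w) ≠ 0 := fun h => hz (by simp only [hΦdef]; rw [h]; ring)
      have h2 : f₂ (z.1, v') ≠ 0 := fun h => hz (by simp only [hΦdef]; rw [h]; ring)
      exact Set.mem_prod.mpr ⟨hsupp₂ (z.1, v') h2, (hsupp₁ (z.2, w) h1).1⟩
  -- step 1 : the product of kernels as a double integral
  have step1 : ∀ w : V, knKer ν g f₁ v w * knKer ν g f₂ w v'
      = ∫ q', ∫ q, Φ (q', (q, w)) ∂μQ ∂μQ := by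
    intro w
    rw [hKer f₁ hf₁m v w, hKer f₂ hf₂m w v', ← integral_mul_const]
    congr 1
    funext q'
    rw [← integral_const_mul]
    congr 1
    funext q
    simp only [hΦdef]
    ring
  -- step 2 : the kernel of the twisted product as an iterated integral
  have step2 : knKer ν g (twistedProd μQ μV φ mod f₁ f₂) v v'
      = ∫ q', ∫ p : Q × V, Φ (q', p) ∂(μQ.prod μV) ∂μQ := by
    rw [hKer _ hf₃m v v']
    congr 1
    funext q'
    simp only [twistedProd]
    rw [← integral_const_mul]
    congr 1
    funext p
    have hXY : ((φ q' (v / v') : ℂ)) * (starRingEnd ℂ) ((φ q' (p.2 / v') : ℂ))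
        = ((φ q' (v / p.2) : ℂ)) := by
      rw [hchar]
      have harg : (v / v') / (p.2 / v') = v / p.2 := by
        rw [div_div_div_cancel_right]
      rw [harg]
    simp only [hΦdef]
    rw [← hXY]
    ring
  -- Fubini juggling
  have huncurry : Function.uncurry (fun (q' : Q) (p : Q × V) => Φ (q', p)) = Φ := rfl
  have hswap1 : ∫ q', ∫ p : Q × V, Φ (q', p) ∂(μQ.prod μV) ∂μQ
      = ∫ p : Q × V, ∫ q', Φ (q', p) ∂μQ ∂(μQ.prod μV) := by
    refine integral_integral_swap ?_
    rw [huncurry]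
    exact hΦint
  have hGint : Integrable (fun p : Q × V => ∫ q', Φ (q', p) ∂μQ) (μQ.prod μV) :=
    hΦint.integral_prod_right
  have hsplit : ∫ p : Q × V, ∫ q', Φ (q', p) ∂μQ ∂(μQ.prod μV)
      = ∫ q, ∫ w, ∫ q', Φ (q', (q, w)) ∂μQ ∂μV ∂μQ :=
    integral_prod _ hGint
  have hswap2 : ∫ q, ∫ w, ∫ q', Φ (q', (q, w)) ∂μQ ∂μV ∂μQ
      = ∫ w, ∫ q, ∫ q', Φ (q', (q, w)) ∂μQ ∂μQ ∂μV := by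
    refine integral_integral_swap ?_
    have : Function.uncurry (fun (q : Q) (w : V) => ∫ q', Φ (q', (q, w)) ∂μQ)
        = fun p : Q × V => ∫ q', Φ (q', p) ∂μQ := rfl
    rw [this]
    exact hGint
  have hswap3 : ∀ w : V, ∫ q, ∫ q', Φ (q', (q, w)) ∂μQ ∂μQ
      = ∫ q', ∫ q, Φ (q', (q, w)) ∂μQ ∂μQ := by
    intro w
    refine integral_integral_swap ?_
    have : Function.uncurry (fun (q q' : Q) => Φ (q', (q, w)))
        = fun z : Q × Q => Φ (z.2, (z.1, w)) := rfl
    rw [this]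
    exact hΦintQQ w
  calc ∫ w, knKer ν g f₁ v w * knKer ν g f₂ w v' ∂μV
      = ∫ w, ∫ q', ∫ q, Φ (q', (q, w)) ∂μQ ∂μQ ∂μV := by
        refine integral_congr_ae (Filter.Eventually.of_forall fun w => ?_)
        exact step1 w
    _ = ∫ w, ∫ q, ∫ q', Φ (q', (q, w)) ∂μQ ∂μQ ∂μV := by
        refine integral_congr_ae (Filter.Eventually.of_forall fun w => ?_)
        exact (hswap3 w).symm
    _ = ∫ q, ∫ w, ∫ q', Φ (q', (q, w)) ∂μQ ∂μV ∂μQ := hswap2.symm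
    _ = ∫ p : Q × V, ∫ q', Φ (q', p) ∂μQ ∂(μQ.prod μV) := hsplit.symm
    _ = ∫ q', ∫ p : Q × V, Φ (q', p) ∂(μQ.prod μV) ∂μQ := hswap1.symm
    _ = knKer ν g (twistedProd μQ μV φ mod f₁ f₂) v v' := step2.symm
end

section
/- Assume the dual orbit setup, and assume in addition that the pairing map Q × V → ℂ, (q,w) ↦ φ(q)(w), is continuous. Then the set of continuous compactly supported functions on Q × V is closed under the twisted product: for continuous compactly supported f₁, f₂ : Q × V → ℂ, the function f₃ defined by f₃(q',v) := ∫_{Q×V} φ(q)(w−v) · conj(φ(q')(w−v)) · f₁(q',w) · f₂(q,v) · |q|⁻¹ dμ_Q(q) dμ_V(w) is again continuous and compactly supported on Q × V. -/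
open MeasureTheory
open scoped ENNReal

/-- In the dual orbit setup, if moreover the pairing
`(q,w) ↦ φ(q)(w)` is continuous, then the continuous compactly supported functions on `Q × V`
are closed under the twisted product: for continuous compactly supported `f₁, f₂ : Q × V → ℂ`,
the function `f₃ = f₁ ⋆ f₂` is again continuous and compactly supported. -/
theorem twistedProd_continuous_compactly_supported
    (Q : Type*) [Group Q] [TopologicalSpace Q] [IsTopologicalGroup Q] [LocallyCompactSpace Q]
    [SecondCountableTopology Q] [MeasurableSpace Q] [BorelSpace Q]
    (μQ : Measure Q) [μQ.IsHaarMeasure]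
    (V : Type*) [CommGroup V] [TopologicalSpace V] [IsTopologicalGroup V]
    [LocallyCompactSpace V] [SecondCountableTopology V] [MeasurableSpace V] [BorelSpace V]
    (μV : Measure V) [μV.IsHaarMeasure]
    [MeasurableSpace (PontryaginDual V)] [BorelSpace (PontryaginDual V)]
    (ν : Measure (PontryaginDual V)) [ν.IsHaarMeasure]
    -- the action of `Q` on `V` by topological automorphisms, and its moduli
    (ρ : Q →* MulAut V) (hρcont : ∀ q : Q, Continuous (ρ q))
    (mod : Q → ℝ) (hmodpos : ∀ q, 0 < mod q)
    (hmodmul : ∀ q q' : Q, mod (q * q') = mod q * mod q')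
    (hscale : ∀ q : Q, μV.map (ρ q) = (ENNReal.ofReal (mod q))⁻¹ • μV)
    -- the dual orbit assumptions
    (ξ₀ : PontryaginDual V) (φ : Q → PontryaginDual V)
    (hφdef : ∀ (q : Q) (v : V), (φ q) v = ξ₀ ((ρ q)⁻¹ v))
    (hφinj : Function.Injective φ) (hφmeas : Measurable φ)
    (hφconull : ν (Set.range φ)ᶜ = 0)
    (hν : (μQ.withDensity fun q => ENNReal.ofReal (mod q)⁻¹).map φ = ν)
    -- the additional continuity assumption on the pairing
    (hpair : Continuous fun p : Q × V => ((φ p.1 p.2 : ℂ)))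
    -- the two continuous compactly supported functions
    (f₁ f₂ : Q × V → ℂ) (hf₁c : Continuous f₁) (hf₁s : HasCompactSupport f₁)
    (hf₂c : Continuous f₂) (hf₂s : HasCompactSupport f₂) :
    Continuous (twistedProd μQ μV φ mod f₁ f₂) ∧
      HasCompactSupport (twistedProd μQ μV φ mod f₁ f₂) := by
  classical
  -- `φ` is continuous, since the pairing is jointly continuous
  have hφcont : Continuous φ := by
    apply ContinuousMonoidHom.continuous_of_continuous_uncurry
    have hind : Topology.IsInducing ((↑) : Circle → ℂ) := ⟨rfl⟩
    exact hind.continuous_iff.mpr hpair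
  -- the density `d` and the measure `μ' = d · μQ`
  set d : Q → ℝ≥0∞ := fun q => ENNReal.ofReal (mod q)⁻¹ with hd_def
  set μ' : Measure Q := μQ.withDensity d with hμ'_def
  -- `μ'` is finite on compact sets
  have hμ'K : ∀ K : Set Q, IsCompact K → μ' K < ⊤ := by
    intro K hK
    have h1 : K ⊆ φ ⁻¹' (closure (φ '' K)) := fun x hx =>
      subset_closure (Set.mem_image_of_mem φ hx)
    calc μ' K ≤ μ' (φ ⁻¹' (closure (φ '' K))) := measure_mono h1
      _ = ν (closure (φ '' K)) := by
          rw [← hν, Measure.map_apply hφmeas isClosed_closure.measurableSet]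
      _ < ⊤ := ((hK.image hφcont).closure).measure_lt_top
  haveI : IsFiniteMeasureOnCompacts μ' := ⟨fun K hK => hμ'K K hK⟩
  haveI : SigmaFinite μ' := inferInstance
  -- a compact closed set `s` with `0 < μ' s < ∞`
  have hμ'univ : μ' Set.univ = ν Set.univ := by
    rw [← hν, Measure.map_apply hφmeas MeasurableSet.univ, Set.preimage_univ]
  have hνuniv : ν Set.univ ≠ 0 :=
    (isOpen_univ.measure_pos ν ⟨1, trivial⟩).ne'
  obtain ⟨n, hn⟩ : ∃ n, μ' (compactCovering Q n) ≠ 0 := by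
    by_contra hcon
    push_neg at hcon
    have h0 : μ' (⋃ n, compactCovering Q n) = 0 := measure_iUnion_null hcon
    rw [iUnion_compactCovering, hμ'univ] at h0
    exact hνuniv h0
  set s : Set Q := closure (compactCovering Q n) with hs_def
  have hs_comp : IsCompact s := (isCompact_compactCovering Q n).closure
  have hs_closed : IsClosed s := isClosed_closure
  set c : ℝ≥0∞ := μ' s with hc_def
  have hc0 : c ≠ 0 := fun h => hn (measure_mono_null subset_closure h)
  have hcT : c ≠ ⊤ := (hμ'K s hs_comp).ne
  -- the key translation identity
  have key : ∀ q : Q, μ' ((fun x => q * x) '' s) = ENNReal.ofReal (mod q)⁻¹ * c := by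
    intro q
    have e : MeasurableEmbedding (fun x => q * x) :=
      (Homeomorph.mulLeft q).measurableEmbedding
    have hA : MeasurableSet ((fun x => q * x) '' s) :=
      e.measurableSet_image.2 hs_closed.measurableSet
    have h1 : μ' ((fun x => q * x) '' s)
        = ∫⁻ x, ((fun x => q * x) '' s).indicator d x ∂μQ := by
      rw [hμ'_def, withDensity_apply _ hA, lintegral_indicator hA]
    have h2 : (∫⁻ x, ((fun x => q * x) '' s).indicator d x ∂μQ)
        = ∫⁻ x, ((fun x => q * x) '' s).indicator d (q * x) ∂μQ := by
      conv_lhs => rw [← MeasureTheory.map_mul_left_eq_self μQ q]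
      exact e.lintegral_map _
    have h3 : ∀ x : Q, ((fun x => q * x) '' s).indicator d (q * x)
        = ENNReal.ofReal (mod q)⁻¹ * s.indicator d x := by
      intro x
      have hmem : q * x ∈ (fun x => q * x) '' s ↔ x ∈ s :=
        (mul_right_injective q).mem_set_image
      by_cases hx : x ∈ s
      · rw [Set.indicator_of_mem (hmem.2 hx) d, Set.indicator_of_mem hx d]
        show ENNReal.ofReal (mod (q * x))⁻¹ = _
        rw [hmodmul, mul_inv, ENNReal.ofReal_mul (inv_nonneg.2 (hmodpos q).le)]
      · rw [Set.indicator_of_notMem (fun h => hx (hmem.1 h)) d,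
          Set.indicator_of_notMem hx d, mul_zero]
    calc μ' ((fun x => q * x) '' s)
        = ∫⁻ x, ENNReal.ofReal (mod q)⁻¹ * s.indicator d x ∂μQ := by
          rw [h1, h2]; exact lintegral_congr h3
      _ = ENNReal.ofReal (mod q)⁻¹ * ∫⁻ x, s.indicator d x ∂μQ :=
          lintegral_const_mul' _ _ ENNReal.ofReal_ne_top
      _ = ENNReal.ofReal (mod q)⁻¹ * c := by
          rw [hc_def, hμ'_def, withDensity_apply _ hs_closed.measurableSet,
            lintegral_indicator hs_closed.measurableSet]
  -- a measurable version of `q ↦ μ' (q • s)`, via the Radon–Nikodym derivative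
  set g : Q → ℝ≥0∞ := μ'.rnDeriv μQ with hg_def
  have hgmeas : Measurable g := Measure.measurable_rnDeriv μ' μQ
  have hgden : μQ.withDensity g = μ' := by
    rw [hg_def]
    exact Measure.withDensity_rnDeriv_eq μ' μQ
      (by rw [hμ'_def]; exact withDensity_absolutelyContinuous μQ d)
  have hw_meas : Measurable (fun q : Q =>
      ∫⁻ x, g x * s.indicator (fun _ => (1 : ℝ≥0∞)) (q⁻¹ * x) ∂μQ) := by
    apply Measurable.lintegral_prod_right'
      (f := fun z : Q × Q => g z.2 * s.indicator (fun _ => (1 : ℝ≥0∞)) (z.1⁻¹ * z.2))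
    exact (hgmeas.comp measurable_snd).mul
      ((measurable_const.indicator hs_closed.measurableSet).comp
        ((continuous_fst.inv.mul continuous_snd).measurable))
  have hw_eq : ∀ q : Q, (∫⁻ x, g x * s.indicator (fun _ => (1 : ℝ≥0∞)) (q⁻¹ * x) ∂μQ)
      = μ' ((fun x => q * x) '' s) := by
    intro q
    have e : MeasurableEmbedding (fun x => q * x) :=
      (Homeomorph.mulLeft q).measurableEmbedding
    have hA : MeasurableSet ((fun x => q * x) '' s) :=
      e.measurableSet_image.2 hs_closed.measurableSet
    rw [← hgden, withDensity_apply _ hA, ← lintegral_indicator hA]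
    apply lintegral_congr
    intro x
    have hmem : x ∈ (fun y => q * y) '' s ↔ q⁻¹ * x ∈ s := by
      constructor
      · rintro ⟨y, hy, rfl⟩; simpa using hy
      · intro h; exact ⟨q⁻¹ * x, h, by simp⟩
    by_cases hx : q⁻¹ * x ∈ s
    · rw [Set.indicator_of_mem hx, Set.indicator_of_mem (hmem.2 hx) g, mul_one]
    · rw [Set.indicator_of_notMem hx, Set.indicator_of_notMem (fun h => hx (hmem.1 h)) g,
        mul_zero]
  -- measurability of the modulus
  have hd_meas : Measurable d := by
    have hrepr : d = fun q =>
        (∫⁻ x, g x * s.indicator (fun _ => (1 : ℝ≥0∞)) (q⁻¹ * x) ∂μQ) / c := by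
      funext q
      rw [ENNReal.eq_div_iff hc0 hcT, hw_eq q, key q, mul_comm]
    rw [hrepr]
    exact hw_meas.div measurable_const
  have hinv_meas : Measurable fun q : Q => (mod q)⁻¹ := by
    have h : (fun q : Q => (mod q)⁻¹) = fun q => (d q).toReal := by
      funext q
      rw [hd_def]
      exact (ENNReal.toReal_ofReal (inv_nonneg.2 (hmodpos q).le)).symm
    rw [h]
    exact hd_meas.ennreal_toReal
  -- the supports
  have hA₁comp : IsCompact (Prod.fst '' tsupport f₁) := hf₁s.image continuous_fst
  have hB₂comp : IsCompact (Prod.snd '' tsupport f₂) := hf₂s.image continuous_snd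
  have hKQcomp : IsCompact (closure (Prod.fst '' tsupport f₂)) :=
    (hf₂s.image continuous_fst).closure
  have hKVcomp : IsCompact (closure (Prod.snd '' tsupport f₁)) :=
    (hf₁s.image continuous_snd).closure
  have hKQm : MeasurableSet (closure (Prod.fst '' tsupport f₂)) :=
    isClosed_closure.measurableSet
  have hKVm : MeasurableSet (closure (Prod.snd '' tsupport f₁)) :=
    isClosed_closure.measurableSet
  have hmem₁ : ∀ (a : Q) (b : V), f₁ (a, b) ≠ 0 →
      a ∈ Prod.fst '' tsupport f₁ ∧ b ∈ closure (Prod.snd '' tsupport f₁) := by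
    intro a b h
    have hts : (a, b) ∈ tsupport f₁ := subset_tsupport f₁ h
    exact ⟨⟨(a, b), hts, rfl⟩, subset_closure ⟨(a, b), hts, rfl⟩⟩
  have hmem₂ : ∀ (a : Q) (b : V), f₂ (a, b) ≠ 0 →
      a ∈ closure (Prod.fst '' tsupport f₂) ∧ b ∈ Prod.snd '' tsupport f₂ := by
    intro a b h
    have hts : (a, b) ∈ tsupport f₂ := subset_tsupport f₂ h
    exact ⟨subset_closure ⟨(a, b), hts, rfl⟩, ⟨(a, b), hts, rfl⟩⟩
  -- bounds for f₁ and f₂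
  obtain ⟨C₁, hC₁⟩ := hf₁c.bounded_above_of_compact_support hf₁s
  obtain ⟨C₂, hC₂⟩ := hf₂c.bounded_above_of_compact_support hf₂s
  have hC₁0 : 0 ≤ C₁ := le_trans (norm_nonneg _) (hC₁ (1, 1))
  have hC₂0 : 0 ≤ C₂ := le_trans (norm_nonneg _) (hC₂ (1, 1))
  -- the integrand
  set F : Q × V → Q × V → ℂ := fun x p =>
    ((φ p.1 (p.2 / x.2) : ℂ)) * (starRingEnd ℂ) ((φ x.1 (p.2 / x.2) : ℂ)) *
      f₁ (x.1, p.2) * f₂ (p.1, x.2) * (((mod p.1)⁻¹ : ℝ) : ℂ) with hF_def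
  have htp : twistedProd μQ μV φ mod f₁ f₂ = fun x => ∫ p, F x p ∂(μQ.prod μV) := rfl
  -- norm of the integrand
  have hnorm1 : ∀ (ξ : PontryaginDual V) (v : V), ‖(ξ v : ℂ)‖ = 1 := fun ξ v => by
    exact Circle.norm_coe _
  have hFnorm : ∀ x p, ‖F x p‖ = ‖f₁ (x.1, p.2)‖ * ‖f₂ (p.1, x.2)‖ * (mod p.1)⁻¹ := by
    intro x p
    rw [hF_def]
    simp only
    rw [norm_mul, norm_mul, norm_mul, norm_mul, hnorm1, starRingEnd_apply, norm_star,
      hnorm1, Complex.norm_real, Real.norm_of_nonneg (inv_nonneg.2 (hmodpos _).le),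
      one_mul, one_mul]
  -- the dominating function
  set bound : Q × V → ℝ := fun p =>
    ((closure (Prod.fst '' tsupport f₂)).indicator (fun q => (C₁ * C₂) * (mod q)⁻¹) p.1) *
      ((closure (Prod.snd '' tsupport f₁)).indicator (fun _ => (1 : ℝ)) p.2) with hbound_def
  have hbound_nonneg : ∀ p, 0 ≤ bound p := by
    intro p
    exact mul_nonneg
      (Set.indicator_nonneg (fun q _ =>
        mul_nonneg (mul_nonneg hC₁0 hC₂0) (inv_nonneg.2 (hmodpos q).le)) _)
      (Set.indicator_nonneg (fun _ _ => zero_le_one) _)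
  have hbound_le : ∀ x p, ‖F x p‖ ≤ bound p := by
    intro x p
    by_cases h1 : f₁ (x.1, p.2) = 0
    · rw [hFnorm x p, h1]
      simpa using hbound_nonneg p
    by_cases h2 : f₂ (p.1, x.2) = 0
    · rw [hFnorm x p, h2]
      simpa using hbound_nonneg p
    obtain ⟨-, hb⟩ := hmem₁ _ _ h1
    obtain ⟨hc', -⟩ := hmem₂ _ _ h2
    rw [hFnorm x p]
    have hbp : bound p = (C₁ * C₂) * (mod p.1)⁻¹ := by
      rw [hbound_def]
      simp only
      rw [Set.indicator_of_mem hc', Set.indicator_of_mem hb, mul_one]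
    rw [hbp]
    exact mul_le_mul_of_nonneg_right
      (mul_le_mul (hC₁ (x.1, p.2)) (hC₂ (p.1, x.2)) (norm_nonneg _) hC₁0)
      (inv_nonneg.2 (hmodpos _).le)
  -- integrability of the dominating function
  have hb1 : Integrable
      ((closure (Prod.fst '' tsupport f₂)).indicator fun q => (C₁ * C₂) * (mod q)⁻¹) μQ := by
    rw [integrable_indicator_iff hKQm]
    constructor
    · exact (measurable_const.mul hinv_meas).aestronglyMeasurable
    · show (∫⁻ q, ‖(C₁ * C₂) * (mod q)⁻¹‖ₑ
          ∂(μQ.restrict (closure (Prod.fst '' tsupport f₂)))) < ⊤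
      have heq : ∀ q : Q, ‖(C₁ * C₂) * (mod q)⁻¹‖ₑ
          = ENNReal.ofReal (C₁ * C₂) * d q := by
        intro q
        rw [Real.enorm_eq_ofReal
            (mul_nonneg (mul_nonneg hC₁0 hC₂0) (inv_nonneg.2 (hmodpos q).le)),
          ENNReal.ofReal_mul (mul_nonneg hC₁0 hC₂0)]
      calc (∫⁻ q, ‖(C₁ * C₂) * (mod q)⁻¹‖ₑ
            ∂(μQ.restrict (closure (Prod.fst '' tsupport f₂))))
          = ∫⁻ q, ENNReal.ofReal (C₁ * C₂) * d q
            ∂(μQ.restrict (closure (Prod.fst '' tsupport f₂))) := lintegral_congr heq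
        _ = ENNReal.ofReal (C₁ * C₂) * ∫⁻ q in closure (Prod.fst '' tsupport f₂), d q ∂μQ :=
            lintegral_const_mul' _ _ ENNReal.ofReal_ne_top
        _ = ENNReal.ofReal (C₁ * C₂) * μ' (closure (Prod.fst '' tsupport f₂)) := by
            rw [hμ'_def, withDensity_apply _ hKQm]
        _ < ⊤ := ENNReal.mul_lt_top ENNReal.ofReal_lt_top (hμ'K _ hKQcomp)
  have hb2 : Integrable ((closure (Prod.snd '' tsupport f₁)).indicator fun _ => (1 : ℝ)) μV := by
    rw [integrable_indicator_iff hKVm]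
    exact integrableOn_const hKVcomp.measure_lt_top.ne
  have hbint : Integrable bound (μQ.prod μV) := hb1.mul_prod hb2
  -- measurability of the integrand
  have hFmeas : ∀ x : Q × V, AEStronglyMeasurable (F x) (μQ.prod μV) := by
    intro x
    apply Measurable.aestronglyMeasurable
    have ha : Measurable fun p : Q × V => ((φ p.1 (p.2 / x.2) : ℂ)) :=
      (hpair.comp (continuous_fst.prodMk (continuous_snd.div' continuous_const))).measurable
    have hb : Measurable fun p : Q × V => (starRingEnd ℂ) ((φ x.1 (p.2 / x.2) : ℂ)) :=
      (continuous_star.comp (hpair.comp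
        ((continuous_const : Continuous fun _ : Q × V => x.1).prodMk
          (continuous_snd.div' continuous_const)))).measurable
    have hcc : Measurable fun p : Q × V => f₁ (x.1, p.2) :=
      (hf₁c.comp (continuous_const.prodMk continuous_snd)).measurable
    have he : Measurable fun p : Q × V => f₂ (p.1, x.2) :=
      (hf₂c.comp (continuous_fst.prodMk continuous_const)).measurable
    have hm : Measurable fun p : Q × V => (((mod p.1)⁻¹ : ℝ) : ℂ) :=
      Complex.continuous_ofReal.measurable.comp (hinv_meas.comp measurable_fst)
    exact (((ha.mul hb).mul hcc).mul he).mul hm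
  -- continuity of the integrand in the parameter
  have hFcont : ∀ p : Q × V, Continuous fun x : Q × V => F x p := by
    intro p
    have ha : Continuous fun x : Q × V => ((φ p.1 (p.2 / x.2) : ℂ)) :=
      hpair.comp ((continuous_const : Continuous fun _ : Q × V => p.1).prodMk
        (continuous_const.div' continuous_snd))
    have hb : Continuous fun x : Q × V => (starRingEnd ℂ) ((φ x.1 (p.2 / x.2) : ℂ)) :=
      continuous_star.comp (hpair.comp
        (continuous_fst.prodMk (continuous_const.div' continuous_snd)))
    have hcc : Continuous fun x : Q × V => f₁ (x.1, p.2) :=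
      hf₁c.comp (continuous_fst.prodMk continuous_const)
    have he : Continuous fun x : Q × V => f₂ (p.1, x.2) :=
      hf₂c.comp (continuous_const.prodMk continuous_snd)
    exact (((ha.mul hb).mul hcc).mul he).mul continuous_const
  -- continuity of the twisted product
  have hcont : Continuous (twistedProd μQ μV φ mod f₁ f₂) := by
    rw [htp, continuous_iff_continuousAt]
    intro x₀
    exact continuousAt_of_dominated
      (Filter.Eventually.of_forall hFmeas)
      (Filter.Eventually.of_forall fun x => ae_of_all _ (hbound_le x))
      hbint
      (ae_of_all _ fun p => (hFcont p).continuousAt)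
  -- vanishing outside a compact set
  have hzero : ∀ x : Q × V,
      x ∉ (Prod.fst '' tsupport f₁) ×ˢ (Prod.snd '' tsupport f₂) →
      twistedProd μQ μV φ mod f₁ f₂ x = 0 := by
    intro x hx
    have hor : x.1 ∉ Prod.fst '' tsupport f₁ ∨ x.2 ∉ Prod.snd '' tsupport f₂ := by
      by_contra hcon
      push_neg at hcon
      exact hx ⟨hcon.1, hcon.2⟩
    have hzero' : ∀ p : Q × V, F x p = 0 := by
      intro p
      rcases hor with h | h
      · have h1 : f₁ (x.1, p.2) = 0 := by
          by_contra hne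
          exact h (hmem₁ _ _ hne).1
        rw [hF_def]
        simp only
        simp [h1]
      · have h2 : f₂ (p.1, x.2) = 0 := by
          by_contra hne
          exact h (hmem₂ _ _ hne).2
        rw [hF_def]
        simp only
        simp [h2]
    rw [htp]
    simp only
    rw [show (fun p => F x p) = fun _ => (0 : ℂ) from funext hzero']
    exact integral_zero _ _
  have hsupp : HasCompactSupport (twistedProd μQ μV φ mod f₁ f₂) := by
    apply HasCompactSupport.intro' ((hA₁comp.prod hB₂comp).closure) isClosed_closure
    intro x hx
    exact hzero x fun h => hx (subset_closure h)
  exact ⟨hcont, hsupp⟩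
end

section
/- Assume the dual orbit setup. For bounded Borel functions F, F' : Q × V̂ → ℂ, define their twisted convolution (F ♦ F')(q,ξ) := ∫_{V̂} F(q,ξ') · F'(g(φ(q) − ξ'), ξ − ξ') dν(ξ'). Suppose F₁, F₂, F₃ : Q × V̂ → ℂ are bounded Borel functions such that each Fᵢ vanishes outside Kᵢ × Cᵢ for some compact Kᵢ ⊆ Q and some Borel set Cᵢ ⊆ V̂ of finite ν-measure. Then all the integrals involved converge absolutely and the twisted convolution is associative: ((F₁ ♦ F₂) ♦ F₃)(q,ξ) = (F₁ ♦ (F₂ ♦ F₃))(q,ξ) for every (q,ξ) ∈ Q × V̂. (This is the Fourier-transformed form of the associativity of the Kohn–Nirenberg star product on G = Q ⋉ V.) -/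
open MeasureTheory
open scoped ENNReal

/-- The twisted convolution of bounded Borel functions on `Q × V̂`:
`(F ♦ F')(q,ξ) = ∫_{V̂} F(q,ξ') · F'(g(φ(q) − ξ'), ξ − ξ') dν(ξ')`
(the dual group `V̂` is written multiplicatively, so differences become quotients). -/
noncomputable def twistedConv {Q V : Type*} [CommGroup V] [TopologicalSpace V]
    [MeasurableSpace (PontryaginDual V)]
    (ν : Measure (PontryaginDual V)) (φ : Q → PontryaginDual V) (g : PontryaginDual V → Q)
    (F F' : Q × PontryaginDual V → ℂ) : Q × PontryaginDual V → ℂ :=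
  fun x =>
    ∫ ξ' : PontryaginDual V, F (x.1, ξ') * F' (g (φ x.1 / ξ'), x.2 / ξ') ∂ν

namespace TCAux

open Topology Filter Set Pointwise

/-- A bounded a.e. strongly measurable function vanishing outside a finite-measure set is
integrable. -/
lemma integrable_of_bound_support {α : Type*} [MeasurableSpace α] {ν : Measure α}
    {f : α → ℂ} (hf : AEStronglyMeasurable f ν) (B : ℝ) {C : Set α}
    (hC : MeasurableSet C) (hCfin : ν C ≠ ⊤)
    (hb : ∀ ξ, ‖f ξ‖ ≤ B) (hsupp : ∀ ξ, ξ ∉ C → f ξ = 0) : Integrable f ν := by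
  refine Integrable.mono' (g := C.indicator fun _ => B)
    ((integrableOn_const hCfin).integrable_indicator hC) hf
    (Filter.Eventually.of_forall fun ξ => ?_)
  by_cases h : ξ ∈ C
  · simpa [Set.indicator_of_mem h] using hb ξ
  · simp [Set.indicator_of_notMem h, hsupp ξ h]

/-- If the Pontryagin dual of a second countable group is σ-compact, it is second countable:
compact subsets embed into `ℕ → Circle` via evaluation at a dense sequence. -/
lemma secondCountable_dual (V : Type*) [CommGroup V] [TopologicalSpace V]
    [IsTopologicalGroup V] [SecondCountableTopology V]
    [SigmaCompactSpace (PontryaginDual V)] [LocallyCompactSpace (PontryaginDual V)] :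
    SecondCountableTopology (PontryaginDual V) := by
  haveI : Nonempty V := ⟨1⟩
  obtain ⟨u, hu⟩ := TopologicalSpace.exists_dense_seq V
  set e : PontryaginDual V → (ℕ → Circle) := fun χ n => χ (u n) with he
  have hec : Continuous e := by
    refine continuous_pi fun n => ?_
    have h : Continuous fun χ : ContinuousMonoidHom V Circle => χ (u n) :=
      ContinuousEvalConst.continuous_eval_const (u n)
    exact h
  have hei : Function.Injective e := by
    intro χ χ' hid
    have hcχ : Continuous fun v : V => χ v := map_continuous (F := ContinuousMonoidHom V Circle) χ
    have hcχ' : Continuous fun v : V => χ' v :=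
      map_continuous (F := ContinuousMonoidHom V Circle) χ'
    have hfun : (fun v : V => χ v) = fun v => χ' v := by
      refine Continuous.ext_on hu hcχ hcχ' ?_
      rintro x ⟨n, rfl⟩
      exact congrFun hid n
    exact DFunLike.ext χ χ' fun v => congrFun hfun v
  have hK : ∀ s : Set (PontryaginDual V), IsCompact s → SecondCountableTopology s := by
    intro s hs
    haveI : CompactSpace s := isCompact_iff_compactSpace.mp hs
    have hce : Continuous fun x : s => e x := hec.comp continuous_subtype_val
    have hie : Function.Injective fun x : s => e x := hei.comp Subtype.val_injective
    exact (hce.isClosedEmbedding hie).isEmbedding.secondCountableTopology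
  let K := CompactExhaustion.choice (PontryaginDual V)
  haveI : ∀ n : ℕ, SecondCountableTopology (interior (K (n + 1))) := by
    intro n
    haveI := hK (K (n + 1)) (K.isCompact _)
    exact (Topology.IsEmbedding.inclusion interior_subset).secondCountableTopology
  refine TopologicalSpace.secondCountableTopology_of_countable_cover
    (U := fun n : ℕ => interior (K (n + 1))) (fun n => isOpen_interior) ?_
  apply Set.eq_univ_of_univ_subset
  rw [← K.iUnion_eq]
  exact Set.iUnion_subset fun n =>
    (K.subset_interior_succ n).trans (Set.subset_iUnion (fun m => interior (K (m + 1))) n)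

/-- In the dual orbit setup, the Pontryagin dual is σ-compact: the quotient by the open
σ-compact subgroup generated by a compact neighbourhood of `1` is countable, since each coset
pulls back via `φ` to a positive-measure subset of the σ-finite measure space `Q`. -/
lemma sigmaCompact_dual
    {Q : Type*} [Group Q] [TopologicalSpace Q] [MeasurableSpace Q]
    {V : Type*} [CommGroup V] [TopologicalSpace V] [IsTopologicalGroup V]
    [MeasurableSpace (PontryaginDual V)] [BorelSpace (PontryaginDual V)]
    [LocallyCompactSpace (PontryaginDual V)]
    (μQ : Measure Q) [SFinite μQ]
    (ν : Measure (PontryaginDual V)) [ν.IsOpenPosMeasure] [IsFiniteMeasureOnCompacts ν]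
    (w : Q → ℝ≥0∞)
    (φ : Q → PontryaginDual V) (hφmeas : Measurable φ)
    (hν : (μQ.withDensity w).map φ = ν) :
    SigmaCompactSpace (PontryaginDual V) := by
  classical
  obtain ⟨W₀, hW₀c, hW₀n⟩ := exists_compact_mem_nhds (1 : PontryaginDual V)
  set W : Set (PontryaginDual V) := W₀ ∪ W₀⁻¹ with hWdef
  have hWc : IsCompact W := hW₀c.union hW₀c.inv
  have hWn : W ∈ 𝓝 1 := Filter.mem_of_superset hW₀n Set.subset_union_left
  have hW1 : (1 : PontryaginDual V) ∈ W := mem_of_mem_nhds hWn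
  have hWsymm : W⁻¹ = W := by
    ext x
    simp only [hWdef, Set.mem_inv, Set.mem_union, inv_inv]
    tauto
  have hWpowc : ∀ n : ℕ, IsCompact (W ^ (n + 1)) := by
    intro n
    induction n with
    | zero => simpa [pow_one] using hWc
    | succ m ih => rw [pow_succ]; exact ih.mul hWc
  let S : Subgroup (PontryaginDual V) :=
  { carrier := ⋃ n : ℕ, W ^ (n + 1)
    one_mem' := Set.mem_iUnion.2 ⟨0, by simpa [pow_one] using hW1⟩
    mul_mem' := by
      intro a b ha hb
      obtain ⟨m, ha⟩ := Set.mem_iUnion.1 ha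
      obtain ⟨n, hb⟩ := Set.mem_iUnion.1 hb
      refine Set.mem_iUnion.2 ⟨m + n + 1, ?_⟩
      have h := Set.mul_mem_mul ha hb
      rw [← pow_add] at h
      have : m + 1 + (n + 1) = m + n + 1 + 1 := by ring
      rwa [this] at h
    inv_mem' := by
      intro a ha
      obtain ⟨n, ha⟩ := Set.mem_iUnion.1 ha
      refine Set.mem_iUnion.2 ⟨n, ?_⟩
      have h1 : a⁻¹ ∈ (W ^ (n + 1))⁻¹ := Set.inv_mem_inv.2 ha
      rwa [← inv_pow, hWsymm] at h1 }
  have hWS : W ⊆ (S : Set (PontryaginDual V)) := fun x hx =>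
    Set.mem_iUnion.2 ⟨0, by simpa [pow_one] using hx⟩
  have hSopen : IsOpen (S : Set (PontryaginDual V)) :=
    S.isOpen_of_mem_nhds (Filter.mem_of_superset hWn hWS)
  have hfiber : ∀ c : PontryaginDual V ⧸ S,
      (QuotientGroup.mk ⁻¹' {c} : Set (PontryaginDual V))
        = (fun y => (Quotient.out c)⁻¹ * y) ⁻¹' (S : Set (PontryaginDual V)) := by
    intro c
    ext y
    simp only [Set.mem_preimage, Set.mem_singleton_iff, SetLike.mem_coe]
    constructor
    · intro h
      exact QuotientGroup.eq.mp ((QuotientGroup.out_eq' c).trans h.symm)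
    · intro h
      exact ((QuotientGroup.out_eq' c).symm.trans (QuotientGroup.eq.mpr h)).symm
  have hfiber_open : ∀ c : PontryaginDual V ⧸ S,
      IsOpen (QuotientGroup.mk ⁻¹' {c} : Set (PontryaginDual V)) := by
    intro c; rw [hfiber c]; exact hSopen.preimage (continuous_mul_left _)
  have hfiber_ne : ∀ c : PontryaginDual V ⧸ S,
      (QuotientGroup.mk ⁻¹' {c} : Set (PontryaginDual V)).Nonempty := by
    intro c
    exact ⟨Quotient.out c, by simp [QuotientGroup.out_eq']⟩
  haveI hcount : Countable (PontryaginDual V ⧸ S) := by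
    have hmeas : ∀ c : PontryaginDual V ⧸ S,
        MeasurableSet (φ ⁻¹' (QuotientGroup.mk ⁻¹' {c})) :=
      fun c => hφmeas (hfiber_open c).measurableSet
    have hdisj : Pairwise (Function.onFun Disjoint fun c : PontryaginDual V ⧸ S =>
        φ ⁻¹' (QuotientGroup.mk ⁻¹' {c})) := by
      intro a b hab
      refine Set.disjoint_left.2 fun x hxa hxb => hab ?_
      simp only [Set.mem_preimage, Set.mem_singleton_iff] at hxa hxb
      rw [← hxa, ← hxb]
    have hpos : ∀ c : PontryaginDual V ⧸ S, 0 < μQ (φ ⁻¹' (QuotientGroup.mk ⁻¹' {c})) := by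
      intro c
      rcases eq_or_lt_of_le (zero_le (a := μQ (φ ⁻¹' (QuotientGroup.mk ⁻¹' {c})))) with h0 | h
      · exfalso
        have hν0 : ν (QuotientGroup.mk ⁻¹' {c} : Set (PontryaginDual V)) = 0 := by
          rw [← hν, Measure.map_apply hφmeas (hfiber_open c).measurableSet,
            withDensity_apply _ (hmeas c), setLIntegral_measure_zero _ _ h0.symm]
        exact absurd hν0 ((hfiber_open c).measure_pos ν (hfiber_ne c)).ne'
      · exact h
    have hcnt := Measure.countable_meas_pos_of_disjoint_iUnion (μ := μQ) hmeas hdisj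
    have huniv : {c : PontryaginDual V ⧸ S |
        0 < μQ (φ ⁻¹' (QuotientGroup.mk ⁻¹' {c}))} = Set.univ :=
      Set.eq_univ_of_forall fun c => hpos c
    rw [huniv] at hcnt
    exact Set.countable_univ_iff.mp hcnt
  haveI : Nonempty (PontryaginDual V ⧸ S) := ⟨QuotientGroup.mk 1⟩
  obtain ⟨fenum, hfenum⟩ := exists_surjective_nat (PontryaginDual V ⧸ S)
  refine ⟨fun n => Quotient.out (fenum n.unpair.1) • W ^ (n.unpair.2 + 1), fun n => ?_, ?_⟩
  · exact (hWpowc _).smul _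
  · apply Set.eq_univ_of_forall
    intro x
    obtain ⟨k, hk⟩ := hfenum (QuotientGroup.mk x : PontryaginDual V ⧸ S)
    have hx : (Quotient.out (QuotientGroup.mk x : PontryaginDual V ⧸ S))⁻¹ * x
        ∈ (S : Set (PontryaginDual V)) := by
      have := QuotientGroup.out_eq' (QuotientGroup.mk x : PontryaginDual V ⧸ S)
      exact QuotientGroup.eq.mp this
    obtain ⟨n, hn⟩ := Set.mem_iUnion.1 hx
    refine Set.mem_iUnion.2 ⟨Nat.pair k n, ?_⟩
    rw [Nat.unpair_pair]
    simp only [hk]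
    exact ⟨(Quotient.out (QuotientGroup.mk x : PontryaginDual V ⧸ S))⁻¹ * x, hn, by
      simp [mul_inv_cancel_left]⟩

end TCAux

/-- In the dual orbit setup, for bounded Borel functions
`F₁, F₂, F₃ : Q × V̂ → ℂ` each vanishing outside `Kᵢ × Cᵢ` with `Kᵢ ⊆ Q` compact and `Cᵢ ⊆ V̂`
Borel of finite measure, all the integrals defining the twisted convolutions converge absolutely
and the twisted convolution is associative: `(F₁ ♦ F₂) ♦ F₃ = F₁ ♦ (F₂ ♦ F₃)` pointwise.
This is the Fourier-transformed form of the associativity of the Kohn–Nirenberg star product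
on `G = Q ⋉ V`. -/
theorem twistedConv_assoc
    (Q : Type*) [Group Q] [TopologicalSpace Q] [IsTopologicalGroup Q] [LocallyCompactSpace Q]
    [SecondCountableTopology Q] [MeasurableSpace Q] [BorelSpace Q]
    (μQ : Measure Q) [μQ.IsHaarMeasure]
    (V : Type*) [CommGroup V] [TopologicalSpace V] [IsTopologicalGroup V]
    [LocallyCompactSpace V] [SecondCountableTopology V] [MeasurableSpace V] [BorelSpace V]
    (μV : Measure V) [μV.IsHaarMeasure]
    [MeasurableSpace (PontryaginDual V)] [BorelSpace (PontryaginDual V)]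
    (ν : Measure (PontryaginDual V)) [ν.IsHaarMeasure]
    -- the action of `Q` on `V` by topological automorphisms, and its moduli
    (ρ : Q →* MulAut V) (hρcont : ∀ q : Q, Continuous (ρ q))
    (mod : Q → ℝ) (hmodpos : ∀ q, 0 < mod q)
    (hmodmul : ∀ q q' : Q, mod (q * q') = mod q * mod q')
    (hscale : ∀ q : Q, μV.map (ρ q) = (ENNReal.ofReal (mod q))⁻¹ • μV)
    -- the dual orbit assumptions
    (ξ₀ : PontryaginDual V) (φ : Q → PontryaginDual V)
    (hφdef : ∀ (q : Q) (v : V), (φ q) v = ξ₀ ((ρ q)⁻¹ v))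
    (hφinj : Function.Injective φ) (hφmeas : Measurable φ)
    (hφconull : ν (Set.range φ)ᶜ = 0)
    (hν : (μQ.withDensity fun q => ENNReal.ofReal (mod q)⁻¹).map φ = ν)
    (g : PontryaginDual V → Q) (hg : Measurable g) (hgφ : ∀ q : Q, g (φ q) = q)
    -- the three bounded Borel functions with supports of finite measure
    (F₁ F₂ F₃ : Q × PontryaginDual V → ℂ)
    (hF₁m : Measurable F₁) (hF₂m : Measurable F₂) (hF₃m : Measurable F₃)
    (hF₁b : ∃ C : ℝ, ∀ x, ‖F₁ x‖ ≤ C) (hF₂b : ∃ C : ℝ, ∀ x, ‖F₂ x‖ ≤ C)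
    (hF₃b : ∃ C : ℝ, ∀ x, ‖F₃ x‖ ≤ C)
    (K₁ K₂ K₃ : Set Q) (hK₁ : IsCompact K₁) (hK₂ : IsCompact K₂) (hK₃ : IsCompact K₃)
    (C₁ C₂ C₃ : Set (PontryaginDual V))
    (hC₁ : MeasurableSet C₁) (hC₂ : MeasurableSet C₂) (hC₃ : MeasurableSet C₃)
    (hC₁fin : ν C₁ ≠ ∞) (hC₂fin : ν C₂ ≠ ∞) (hC₃fin : ν C₃ ≠ ∞)
    (hF₁supp : ∀ x, x ∉ K₁ ×ˢ C₁ → F₁ x = 0)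
    (hF₂supp : ∀ x, x ∉ K₂ ×ˢ C₂ → F₂ x = 0)
    (hF₃supp : ∀ x, x ∉ K₃ ×ˢ C₃ → F₃ x = 0) :
    (∀ x : Q × PontryaginDual V,
        Integrable (fun ξ' => F₁ (x.1, ξ') * F₂ (g (φ x.1 / ξ'), x.2 / ξ')) ν) ∧
    (∀ x : Q × PontryaginDual V,
        Integrable (fun ξ' => F₂ (x.1, ξ') * F₃ (g (φ x.1 / ξ'), x.2 / ξ')) ν) ∧
    (∀ x : Q × PontryaginDual V,
        Integrable
          (fun ξ' => twistedConv ν φ g F₁ F₂ (x.1, ξ') * F₃ (g (φ x.1 / ξ'), x.2 / ξ')) ν) ∧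
    (∀ x : Q × PontryaginDual V,
        Integrable
          (fun ξ' => F₁ (x.1, ξ') * twistedConv ν φ g F₂ F₃ (g (φ x.1 / ξ'), x.2 / ξ')) ν) ∧
    ∀ x : Q × PontryaginDual V,
      twistedConv ν φ g (twistedConv ν φ g F₁ F₂) F₃ x =
        twistedConv ν φ g F₁ (twistedConv ν φ g F₂ F₃) x := by
  classical
  -- Step 0: topological and measure-theoretic infrastructure on the dual group.
  haveI : SigmaCompactSpace (PontryaginDual V) :=
    TCAux.sigmaCompact_dual μQ ν _ φ hφmeas hν
  haveI : SecondCountableTopology (PontryaginDual V) := TCAux.secondCountable_dual V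
  haveI : SigmaFinite ν := inferInstance
  have hreg : ν.Regular := by
    obtain ⟨K₀, hK₀c, hK₀n⟩ := exists_compact_mem_nhds (1 : PontryaginDual V)
    exact Measure.regular_of_isMulLeftInvariant hK₀c
      ⟨1, mem_interior_iff_mem_nhds.2 hK₀n⟩ hK₀c.measure_lt_top.ne
  haveI := hreg
  haveI : ν.IsInvInvariant := inferInstance
  -- bounds
  obtain ⟨B₁, hB₁⟩ := hF₁b
  obtain ⟨B₂, hB₂⟩ := hF₂b
  obtain ⟨B₃, hB₃⟩ := hF₃b
  have hB₁0 : 0 ≤ B₁ := le_trans (norm_nonneg _) (hB₁ (1, 1))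
  have hB₂0 : 0 ≤ B₂ := le_trans (norm_nonneg _) (hB₂ (1, 1))
  have hB₃0 : 0 ≤ B₃ := le_trans (norm_nonneg _) (hB₃ (1, 1))
  -- joint measurability of the convolution kernels
  have hK12m : Measurable fun p : (Q × PontryaginDual V) × PontryaginDual V =>
      F₁ (p.1.1, p.2) * F₂ (g (φ p.1.1 / p.2), p.1.2 / p.2) := by
    apply Measurable.mul
    · exact hF₁m.comp ((measurable_fst.fst).prodMk measurable_snd)
    · exact hF₂m.comp
        (((hg.comp ((hφmeas.comp measurable_fst.fst).div measurable_snd))).prodMk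
          ((measurable_fst.snd).div measurable_snd))
  have hK23m : Measurable fun p : (Q × PontryaginDual V) × PontryaginDual V =>
      F₂ (p.1.1, p.2) * F₃ (g (φ p.1.1 / p.2), p.1.2 / p.2) := by
    apply Measurable.mul
    · exact hF₂m.comp ((measurable_fst.fst).prodMk measurable_snd)
    · exact hF₃m.comp
        (((hg.comp ((hφmeas.comp measurable_fst.fst).div measurable_snd))).prodMk
          ((measurable_fst.snd).div measurable_snd))
  -- measurability of the twisted convolutions
  have htc12sm : StronglyMeasurable (twistedConv ν φ g F₁ F₂) :=
    hK12m.stronglyMeasurable.integral_prod_right'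
  have htc23sm : StronglyMeasurable (twistedConv ν φ g F₂ F₃) :=
    hK23m.stronglyMeasurable.integral_prod_right'
  -- pointwise bound helpers
  have hb12 : ∀ (x : Q × PontryaginDual V) (ξ' : PontryaginDual V),
      ‖F₁ (x.1, ξ') * F₂ (g (φ x.1 / ξ'), x.2 / ξ')‖ ≤ B₁ * B₂ := by
    intro x ξ'
    exact le_trans (norm_mul_le _ _) (mul_le_mul (hB₁ _) (hB₂ _) (norm_nonneg _) hB₁0)
  have hb23 : ∀ (x : Q × PontryaginDual V) (ξ' : PontryaginDual V),
      ‖F₂ (x.1, ξ') * F₃ (g (φ x.1 / ξ'), x.2 / ξ')‖ ≤ B₂ * B₃ := by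
    intro x ξ'
    exact le_trans (norm_mul_le _ _) (mul_le_mul (hB₂ _) (hB₃ _) (norm_nonneg _) hB₂0)
  -- uniform bounds for the twisted convolutions
  have htc12b : ∀ x : Q × PontryaginDual V,
      ‖twistedConv ν φ g F₁ F₂ x‖ ≤ B₁ * B₂ * (ν C₁).toReal := by
    intro x
    have hind : Integrable (C₁.indicator fun _ => B₁ * B₂) ν :=
      (integrableOn_const hC₁fin).integrable_indicator hC₁
    have hle : ‖twistedConv ν φ g F₁ F₂ x‖
        ≤ ∫ ξ', C₁.indicator (fun _ => B₁ * B₂) ξ' ∂ν := by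
      refine norm_integral_le_of_norm_le hind (Filter.Eventually.of_forall fun ξ' => ?_)
      by_cases h : ξ' ∈ C₁
      · rw [Set.indicator_of_mem h]
        exact hb12 x ξ'
      · rw [Set.indicator_of_notMem h, hF₁supp (x.1, ξ') (fun hmem => h hmem.2), zero_mul,
          norm_zero]
    calc ‖twistedConv ν φ g F₁ F₂ x‖ ≤ ∫ ξ', C₁.indicator (fun _ => B₁ * B₂) ξ' ∂ν := hle
      _ = (ν C₁).toReal • (B₁ * B₂) := integral_indicator_const _ hC₁
      _ = B₁ * B₂ * (ν C₁).toReal := by rw [smul_eq_mul]; ring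
  have htc23b : ∀ x : Q × PontryaginDual V,
      ‖twistedConv ν φ g F₂ F₃ x‖ ≤ B₂ * B₃ * (ν C₂).toReal := by
    intro x
    have hind : Integrable (C₂.indicator fun _ => B₂ * B₃) ν :=
      (integrableOn_const hC₂fin).integrable_indicator hC₂
    have hle : ‖twistedConv ν φ g F₂ F₃ x‖
        ≤ ∫ ξ', C₂.indicator (fun _ => B₂ * B₃) ξ' ∂ν := by
      refine norm_integral_le_of_norm_le hind (Filter.Eventually.of_forall fun ξ' => ?_)
      by_cases h : ξ' ∈ C₂
      · rw [Set.indicator_of_mem h]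
        exact hb23 x ξ'
      · rw [Set.indicator_of_notMem h, hF₂supp (x.1, ξ') (fun hmem => h hmem.2), zero_mul,
          norm_zero]
    calc ‖twistedConv ν φ g F₂ F₃ x‖ ≤ ∫ ξ', C₂.indicator (fun _ => B₂ * B₃) ξ' ∂ν := hle
      _ = (ν C₂).toReal • (B₂ * B₃) := integral_indicator_const _ hC₂
      _ = B₂ * B₃ * (ν C₂).toReal := by rw [smul_eq_mul]; ring
  -- Claim 1
  have claim1 : ∀ x : Q × PontryaginDual V,
      Integrable (fun ξ' => F₁ (x.1, ξ') * F₂ (g (φ x.1 / ξ'), x.2 / ξ')) ν := by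
    intro x
    refine TCAux.integrable_of_bound_support ?_ (B₁ * B₂) hC₁ hC₁fin (hb12 x) ?_
    · exact (hK12m.comp (measurable_const.prodMk measurable_id)).aestronglyMeasurable
    · intro ξ' h
      rw [hF₁supp (x.1, ξ') (fun hmem => h hmem.2), zero_mul]
  -- Claim 2
  have claim2 : ∀ x : Q × PontryaginDual V,
      Integrable (fun ξ' => F₂ (x.1, ξ') * F₃ (g (φ x.1 / ξ'), x.2 / ξ')) ν := by
    intro x
    refine TCAux.integrable_of_bound_support ?_ (B₂ * B₃) hC₂ hC₂fin (hb23 x) ?_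
    · exact (hK23m.comp (measurable_const.prodMk measurable_id)).aestronglyMeasurable
    · intro ξ' h
      rw [hF₂supp (x.1, ξ') (fun hmem => h hmem.2), zero_mul]
  -- the support set for the third factor, and its measure
  have hSmeas : ∀ b : PontryaginDual V, MeasurableSet ((fun ξ' => b / ξ') ⁻¹' C₃) :=
    fun b => (measurable_const.div measurable_id) hC₃
  have hSfin : ∀ b : PontryaginDual V, ν ((fun ξ' => b / ξ') ⁻¹' C₃) ≠ ∞ := by
    intro b
    rw [(Measure.measurePreserving_div_left ν b).measure_preimage hC₃.nullMeasurableSet]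
    exact hC₃fin
  -- Claim 3
  have claim3 : ∀ x : Q × PontryaginDual V,
      Integrable
        (fun ξ' => twistedConv ν φ g F₁ F₂ (x.1, ξ') * F₃ (g (φ x.1 / ξ'), x.2 / ξ')) ν := by
    intro x
    refine TCAux.integrable_of_bound_support ?_ (B₁ * B₂ * (ν C₁).toReal * B₃)
      (hSmeas x.2) (hSfin x.2) ?_ ?_
    · exact ((htc12sm.measurable.comp (measurable_const.prodMk measurable_id)).mul
        (hF₃m.comp ((hg.comp (measurable_const.div measurable_id)).prodMk
          (measurable_const.div measurable_id)))).aestronglyMeasurable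
    · intro ξ'
      refine le_trans (norm_mul_le _ _) (mul_le_mul (htc12b _) (hB₃ _) (norm_nonneg _) ?_)
      positivity
    · intro ξ' h
      rw [hF₃supp (g (φ x.1 / ξ'), x.2 / ξ') (fun hmem => h hmem.2), mul_zero]
  -- Claim 4
  have claim4 : ∀ x : Q × PontryaginDual V,
      Integrable
        (fun ξ' => F₁ (x.1, ξ') * twistedConv ν φ g F₂ F₃ (g (φ x.1 / ξ'), x.2 / ξ')) ν := by
    intro x
    refine TCAux.integrable_of_bound_support ?_ (B₁ * (B₂ * B₃ * (ν C₂).toReal))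
      hC₁ hC₁fin ?_ ?_
    · exact ((hF₁m.comp (measurable_const.prodMk measurable_id)).mul
        (htc23sm.measurable.comp ((hg.comp (measurable_const.div measurable_id)).prodMk
          (measurable_const.div measurable_id)))).aestronglyMeasurable
    · intro ξ'
      exact le_trans (norm_mul_le _ _) (mul_le_mul (hB₁ _) (htc23b _) (norm_nonneg _) hB₁0)
    · intro ξ' h
      rw [hF₁supp (x.1, ξ') (fun hmem => h hmem.2), zero_mul]
  refine ⟨claim1, claim2, claim3, claim4, ?_⟩
  -- Associativity
  intro x
  obtain ⟨q, ξ⟩ := x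
  -- Fubini's theorem for the triple kernel
  have hswap : ∫ ξ', ∫ η,
        (F₁ (q, η) * F₂ (g (φ q / η), ξ' / η)) * F₃ (g (φ q / ξ'), ξ / ξ') ∂ν ∂ν
      = ∫ η, ∫ ξ',
        (F₁ (q, η) * F₂ (g (φ q / η), ξ' / η)) * F₃ (g (φ q / ξ'), ξ / ξ') ∂ν ∂ν := by
    apply integral_integral_swap
    have hHm : Measurable fun p : PontryaginDual V × PontryaginDual V =>
        (F₁ (q, p.2) * F₂ (g (φ q / p.2), p.1 / p.2)) * F₃ (g (φ q / p.1), ξ / p.1) := by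
      apply Measurable.mul
      · apply Measurable.mul
        · exact hF₁m.comp (measurable_const.prodMk measurable_snd)
        · exact hF₂m.comp ((hg.comp (measurable_const.div measurable_snd)).prodMk
            (measurable_fst.div measurable_snd))
      · exact hF₃m.comp ((hg.comp (measurable_const.div measurable_fst)).prodMk
          (measurable_const.div measurable_fst))
    refine TCAux.integrable_of_bound_support (hHm.aestronglyMeasurable) (B₁ * B₂ * B₃)
      ((hSmeas ξ).prod hC₁) ?_ ?_ ?_
    · rw [Measure.prod_prod,
        (Measure.measurePreserving_div_left ν ξ).measure_preimage hC₃.nullMeasurableSet]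
      exact ENNReal.mul_ne_top hC₃fin hC₁fin
    · intro p
      refine le_trans (norm_mul_le _ _) (mul_le_mul ?_ (hB₃ _) (norm_nonneg _) (by positivity))
      exact le_trans (norm_mul_le _ _) (mul_le_mul (hB₁ _) (hB₂ _) (norm_nonneg _) hB₁0)
    · intro p hp
      by_cases h2 : p.2 ∈ C₁
      · have h1 : p.1 ∉ (fun ξ' => ξ / ξ') ⁻¹' C₃ := fun h1 => hp ⟨h1, h2⟩
        show (F₁ (q, p.2) * F₂ (g (φ q / p.2), p.1 / p.2)) * F₃ (g (φ q / p.1), ξ / p.1) = 0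
        rw [hF₃supp (g (φ q / p.1), ξ / p.1) (fun hmem => h1 hmem.2), mul_zero]
      · show (F₁ (q, p.2) * F₂ (g (φ q / p.2), p.1 / p.2)) * F₃ (g (φ q / p.1), ξ / p.1) = 0
        rw [hF₁supp (q, p.2) (fun hmem => h2 hmem.2), zero_mul, zero_mul]
  -- left-hand side
  have hLHS : twistedConv ν φ g (twistedConv ν φ g F₁ F₂) F₃ (q, ξ)
      = ∫ ξ', ∫ η,
          (F₁ (q, η) * F₂ (g (φ q / η), ξ' / η)) * F₃ (g (φ q / ξ'), ξ / ξ') ∂ν ∂ν := by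
    refine integral_congr_ae (Filter.Eventually.of_forall fun ξ' => ?_)
    exact (integral_mul_const _ _).symm
  -- right-hand side
  have hRHS : twistedConv ν φ g F₁ (twistedConv ν φ g F₂ F₃) (q, ξ)
      = ∫ η, ∫ ξ',
          (F₁ (q, η) * F₂ (g (φ q / η), ξ' / η)) * F₃ (g (φ q / ξ'), ξ / ξ') ∂ν ∂ν := by
    refine integral_congr_ae ?_
    have hNnull : ν ((fun η => φ q / η) ⁻¹' (Set.range φ)ᶜ) = 0 :=
      (Measure.measurePreserving_div_left ν (φ q)).quasiMeasurePreserving.preimage_null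
        hφconull
    have hae : ∀ᵐ η ∂ν, φ q / η ∈ Set.range φ := by
      rw [ae_iff]
      exact hNnull
    filter_upwards [hae] with η hmem
    obtain ⟨p, hp⟩ := hmem
    have hgp : g (φ q / η) = p := by rw [← hp, hgφ]
    have sub : (∫ ζ, F₂ (p, ζ) * F₃ (g (φ p / ζ), (ξ / η) / ζ) ∂ν)
        = ∫ ξ', F₂ (p, ξ' / η) * F₃ (g (φ q / ξ'), ξ / ξ') ∂ν := by
      calc ∫ ζ, F₂ (p, ζ) * F₃ (g (φ p / ζ), (ξ / η) / ζ) ∂ν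
          = ∫ ξ', F₂ (p, ξ' / η) * F₃ (g (φ p / (ξ' / η)), (ξ / η) / (ξ' / η)) ∂ν :=
            (integral_div_right_eq_self
              (fun ζ => F₂ (p, ζ) * F₃ (g (φ p / ζ), (ξ / η) / ζ)) η).symm
        _ = ∫ ξ', F₂ (p, ξ' / η) * F₃ (g (φ q / ξ'), ξ / ξ') ∂ν := by
            refine integral_congr_ae (Filter.Eventually.of_forall fun ξ' => ?_)
            have h1 : φ p / (ξ' / η) = φ q / ξ' := by
              rw [hp, div_div_div_cancel_right]
            have h2 : ξ / η / (ξ' / η) = ξ / ξ' := div_div_div_cancel_right ξ ξ' η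
            beta_reduce
            rw [h1, h2]
    calc F₁ (q, η) * twistedConv ν φ g F₂ F₃ (g (φ q / η), ξ / η)
        = F₁ (q, η) * ∫ ζ, F₂ (p, ζ) * F₃ (g (φ p / ζ), (ξ / η) / ζ) ∂ν := by rw [hgp]; rfl
      _ = F₁ (q, η) * ∫ ξ', F₂ (p, ξ' / η) * F₃ (g (φ q / ξ'), ξ / ξ') ∂ν := by rw [sub]
      _ = ∫ ξ', F₁ (q, η) * (F₂ (p, ξ' / η) * F₃ (g (φ q / ξ'), ξ / ξ')) ∂ν :=
          (integral_const_mul _ _).symm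
      _ = ∫ ξ', (F₁ (q, η) * F₂ (g (φ q / η), ξ' / η)) * F₃ (g (φ q / ξ'), ξ / ξ') ∂ν := by
          refine integral_congr_ae (Filter.Eventually.of_forall fun ξ' => ?_)
          beta_reduce
          rw [hgp, mul_assoc]
  rw [hLHS, hswap, ← hRHS]
end

section
/- Assume the dual orbit setup (with φ injective and its range conull). Consider the semidirect product group G' = Q ⋉ V̂ with underlying set Q × V̂ and multiplication (q,ξ)(q',ξ') = (qq', ξ + q^♭ξ'). Then: (i) H₁ := {(q, 0) : q ∈ Q} and H₂ := {(q, ξ₀ − q^♭ξ₀) : q ∈ Q} are subgroups of G'; (ii) H₁ ∩ H₂ = {(e, 0)}; (iii) the product set H₁H₂ equals {(q,ξ) ∈ Q × V̂ : ξ + q^♭ξ₀ ∈ φ(Q)}, and this set is conull with respect to the measure μ_Q ⊗ ν. (Thus (Q, ξ₀Qξ₀⁻¹) is a matched pair of subgroups of Q ⋉ V̂.) -/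
open MeasureTheory Pointwise

section Aux

variable {Q : Type*} [Group Q] {W : Type*} [CommGroup W] (δ : Q →* MulAut W) (ξ₀ : W)

/-- The second subgroup `H₂ = {(ξ₀ (δ q ξ₀)⁻¹, q)}`. -/
def auxH₂ : Subgroup (W ⋊[δ] Q) where
  carrier := {x | x.left = ξ₀ * (δ x.right ξ₀)⁻¹}
  one_mem' := by simp [SemidirectProduct.one_left, SemidirectProduct.one_right]
  mul_mem' := by
    rintro a b (ha : a.left = _) (hb : b.left = _)
    show (a * b).left = ξ₀ * (δ (a * b).right ξ₀)⁻¹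
    rw [SemidirectProduct.mul_left, SemidirectProduct.mul_right, ha, hb]
    simp [map_mul, mul_comm, mul_assoc, mul_left_comm]
  inv_mem' := by
    rintro a (ha : a.left = _)
    show a⁻¹.left = ξ₀ * (δ a⁻¹.right ξ₀)⁻¹
    rw [SemidirectProduct.inv_left, SemidirectProduct.inv_right, ha]
    simp [map_mul, mul_comm, mul_assoc, mul_left_comm]

end Aux

/-- In the dual orbit setup, consider the semidirect product
`G' = Q ⋉ V̂ = V̂ ⋊[δ] Q` (with multiplication `(q,ξ)(q',ξ') = (qq', ξ + q^♭ξ')`, written here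
multiplicatively with `δ q = q^♭`). Then `H₁ = {(q,0)}` and `H₂ = {(q, ξ₀ − q^♭ξ₀)}` are
subgroups of `G'`, `H₁ ∩ H₂` is trivial, the product set `H₁H₂` equals
`{(q,ξ) : ξ + q^♭ξ₀ ∈ φ(Q)}`, and this set is conull for `μ_Q ⊗ ν`. Thus
`(Q, ξ₀Qξ₀⁻¹)` is a matched pair of subgroups of `Q ⋉ V̂`. -/
theorem matched_pair_of_dual_orbit
    (Q : Type*) [Group Q] [TopologicalSpace Q] [IsTopologicalGroup Q] [LocallyCompactSpace Q]
    [SecondCountableTopology Q] [MeasurableSpace Q] [BorelSpace Q]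
    (μQ : Measure Q) [μQ.IsHaarMeasure]
    (V : Type*) [CommGroup V] [TopologicalSpace V] [IsTopologicalGroup V]
    [LocallyCompactSpace V] [SecondCountableTopology V]
    [MeasurableSpace (PontryaginDual V)] [BorelSpace (PontryaginDual V)]
    (ν : Measure (PontryaginDual V)) [ν.IsHaarMeasure]
    -- the action of `Q` on `V` and the induced dual action `δ` on `V̂`
    (ρ : Q →* MulAut V)
    (δ : Q →* MulAut (PontryaginDual V))
    (hδ : ∀ (q : Q) (ξ : PontryaginDual V) (v : V), (δ q ξ) v = ξ ((ρ q)⁻¹ v))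
    -- the dual orbit assumptions for `φ q = q^♭ξ₀ = δ q ξ₀`
    (ξ₀ : PontryaginDual V)
    (hφinj : Function.Injective fun q : Q => δ q ξ₀)
    (hφmeas : Measurable fun q : Q => δ q ξ₀)
    (hφconull : ν (Set.range fun q : Q => δ q ξ₀)ᶜ = 0) :
    (∃ H₁ H₂ : Subgroup (PontryaginDual V ⋊[δ] Q),
      (H₁ : Set (PontryaginDual V ⋊[δ] Q)) = {x | x.left = 1} ∧
      (H₂ : Set (PontryaginDual V ⋊[δ] Q)) = {x | x.left = ξ₀ * (δ x.right ξ₀)⁻¹} ∧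
      H₁ ⊓ H₂ = ⊥ ∧
      (H₁ : Set (PontryaginDual V ⋊[δ] Q)) * (H₂ : Set (PontryaginDual V ⋊[δ] Q)) =
        {x | x.left * δ x.right ξ₀ ∈ Set.range fun q : Q => δ q ξ₀}) ∧
    (μQ.prod ν)
        {p : Q × PontryaginDual V | p.2 * δ p.1 ξ₀ ∈ Set.range fun q : Q => δ q ξ₀}ᶜ = 0 := by
  -- second countability of the dual
  have hsc : SecondCountableTopology (PontryaginDual V) :=
    (ContinuousMonoidHom.isInducing_toContinuousMap V Circle).secondCountableTopology
  constructor
  · -- the algebraic part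
    refine ⟨(SemidirectProduct.inr : Q →* PontryaginDual V ⋊[δ] Q).range, auxH₂ δ ξ₀,
      ?_, rfl, ?_, ?_⟩
    · ext x
      constructor
      · rintro ⟨q, rfl⟩; rfl
      · intro hx
        refine ⟨x.right, ?_⟩
        ext
        · rw [SemidirectProduct.left_inr, hx]
        · rw [SemidirectProduct.right_inr]
    · ext x
      simp only [Subgroup.mem_inf, Subgroup.mem_bot, MonoidHom.mem_range]
      constructor
      · rintro ⟨⟨q, rfl⟩, h2⟩
        have h2' : (SemidirectProduct.inr q : PontryaginDual V ⋊[δ] Q).left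
            = ξ₀ * (δ (SemidirectProduct.inr q : PontryaginDual V ⋊[δ] Q).right ξ₀)⁻¹ := h2
        simp only [SemidirectProduct.left_inr, SemidirectProduct.right_inr] at h2'
        have : δ q ξ₀ = δ 1 ξ₀ := by
          simpa [eq_comm, eq_mul_inv_iff_mul_eq] using h2'
        have := hφinj this
        subst this
        simp
      · rintro rfl
        exact ⟨⟨1, by simp⟩, show (1 : PontryaginDual V ⋊[δ] Q).left = _ by simp⟩
    · ext x
      simp only [Set.mem_mul, SetLike.mem_coe, MonoidHom.mem_range, Set.mem_setOf_eq]
      constructor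
      · rintro ⟨a, ⟨q, rfl⟩, b, hb, rfl⟩
        have hb' : b.left = ξ₀ * (δ b.right ξ₀)⁻¹ := hb
        refine ⟨q, ?_⟩
        rw [SemidirectProduct.mul_left, SemidirectProduct.mul_right, hb']
        simp [map_mul, mul_assoc]
      · rintro ⟨q, hq⟩
        refine ⟨SemidirectProduct.inr q, ⟨q, rfl⟩,
          ⟨ξ₀ * (δ (q⁻¹ * x.right) ξ₀)⁻¹, q⁻¹ * x.right⟩, rfl, ?_⟩
        have hq' : δ q ξ₀ = x.left * δ x.right ξ₀ := hq
        have hx : x.left = δ q ξ₀ * (δ x.right ξ₀)⁻¹ := eq_mul_inv_iff_mul_eq.mpr hq'.symm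
        have key : δ q ((δ (q⁻¹ * x.right)) ξ₀) = δ x.right ξ₀ := by
          rw [← MulAut.mul_apply, ← map_mul, mul_inv_cancel_left]
        ext
        · rw [SemidirectProduct.mul_left, SemidirectProduct.left_inr,
            SemidirectProduct.right_inr, one_mul, map_mul, map_inv, key, hx]
        · rw [SemidirectProduct.mul_right, SemidirectProduct.right_inr, mul_inv_cancel_left]
  · -- the measure-theoretic part
    obtain ⟨N, hNsub, hNmeas, hNnull⟩ :=
      exists_measurable_superset_of_null (μ := ν) hφconull
    set T : Q × PontryaginDual V → Q × PontryaginDual V :=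
      fun p => (p.1, p.2 * δ p.1 ξ₀) with hT
    have hTmeas : Measurable fun p : Q × PontryaginDual V => p.2 * δ p.1 ξ₀ :=
      measurable_snd.mul (hφmeas.comp measurable_fst)
    have hTpres : MeasurePreserving T (μQ.prod ν) (μQ.prod ν) := by
      refine MeasurePreserving.skew_product (g := fun q ξ => ξ * δ q ξ₀)
        (MeasurePreserving.id μQ) ?_ (Filter.Eventually.of_forall fun q => ?_)
      · exact hTmeas
      · exact map_mul_right_eq_self ν (δ q ξ₀)
    have hsub : {p : Q × PontryaginDual V |
        p.2 * δ p.1 ξ₀ ∈ Set.range fun q : Q => δ q ξ₀}ᶜ ⊆ T ⁻¹' (Set.univ ×ˢ N) := by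
      intro p hp
      exact ⟨trivial, hNsub hp⟩
    refine le_antisymm ?_ (zero_le (a := _))
    calc (μQ.prod ν) {p : Q × PontryaginDual V |
          p.2 * δ p.1 ξ₀ ∈ Set.range fun q : Q => δ q ξ₀}ᶜ
        ≤ (μQ.prod ν) (T ⁻¹' (Set.univ ×ˢ N)) := measure_mono hsub
      _ = (μQ.prod ν) (Set.univ ×ˢ N) :=
          hTpres.measure_preimage (MeasurableSet.univ.prod hNmeas).nullMeasurableSet
      _ = μQ Set.univ * ν N := Measure.prod_prod _ _
      _ = 0 := by rw [hNnull, mul_zero]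
end

section
/- Let G = ℝ* ⋉ ℝ be the ax+b group, i.e., the set {(q,v) : q ∈ ℝ∖{0}, v ∈ ℝ} with multiplication (q,v)(q',v') = (qq', v + qv'). For k ∈ ℤ, define ρ_k : G → GL₂(ℝ) by ρ_k(q,v) = [[q^k, 0], [−q^k v, q^{k+1}]] (a group homomorphism), and let G act on ℝ² by the contragredient action g · w := (ρ_k(g)ᵀ)⁻¹ w. Then there exists a point w₀ ∈ ℝ² whose orbit is free (trivial stabilizer) and has full Lebesgue measure in ℝ² if and only if k is even. -/
open MeasureTheory Matrix

/-- The representation `ρ_k` of the `ax+b` group `G = ℝ* ⋉ ℝ`: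
`ρ_k(q,v) = [[q^k, 0], [−q^k v, q^{k+1}]]`. -/
noncomputable def rhoK (k : ℤ) (q : ℝˣ) (v : ℝ) : Matrix (Fin 2) (Fin 2) ℝ :=
  !![((q ^ k : ℝˣ) : ℝ), 0; -((q ^ k : ℝˣ) : ℝ) * v, ((q ^ (k + 1) : ℝˣ) : ℝ)]

lemma rhoK_T_inv (k : ℤ) (q : ℝˣ) (v : ℝ) :
    ((rhoK k q v)ᵀ)⁻¹ = !![(q:ℝ)^(-k), (q:ℝ)^(-k-1) * v; 0, (q:ℝ)^(-k-1)] := by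
  have hq : (q : ℝ) ≠ 0 := q.ne_zero
  have h1 : (q:ℝ)^(-k) * (q:ℝ)^(k) = 1 := by rw [← zpow_add₀ hq]; norm_num
  have h2 : (q:ℝ)^(-k-1) * (q:ℝ)^(k+1) = 1 := by rw [← zpow_add₀ hq]; norm_num
  have ht : (rhoK k q v)ᵀ =
      !![((q ^ k : ℝˣ) : ℝ), -((q ^ k : ℝˣ) : ℝ) * v; 0, ((q ^ (k + 1) : ℝˣ) : ℝ)] := by
    rw [rhoK, ← Matrix.transposeᵣ_eq]; rfl
  rw [ht]
  apply Matrix.inv_eq_left_inv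
  ext i j
  fin_cases i <;> fin_cases j <;>
    simp only [Units.val_zpow_eq_zpow_val, Matrix.mul_apply, Fin.sum_univ_two,
      Matrix.cons_val_zero, Matrix.cons_val_one, Matrix.head_cons, Matrix.head_fin_const,
      Matrix.cons_val', Matrix.empty_val', Matrix.cons_val_fin_one, Matrix.one_apply,
      Fin.zero_eta, Fin.mk_one, Matrix.of_apply, if_true, if_false]
  · simpa using h1
  · simp only [Fin.isValue, ne_eq, zero_ne_one, not_false_eq_true, if_neg, if_false]
    linear_combination (-v) * h1 + v * h2
  · simp
  · simpa using h2

lemma rhoK_mulVec (k : ℤ) (q : ℝˣ) (v : ℝ) (w : Fin 2 → ℝ) :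
    ((rhoK k q v)ᵀ)⁻¹.mulVec w =
      ![(q:ℝ)^(-k) * w 0 + (q:ℝ)^(-k-1) * v * w 1, (q:ℝ)^(-k-1) * w 1] := by
  rw [rhoK_T_inv]
  funext i
  fin_cases i <;> simp [Matrix.mulVec, dotProduct, Fin.sum_univ_two]

lemma odd_root {n : ℤ} (hn : Odd n) {y : ℝ} (hy : y ≠ 0) : ∃ c : ℝ, c ≠ 0 ∧ c ^ n = y := by
  have hn0 : n ≠ 0 := by rintro rfl; simp at hn
  have key : ∀ y : ℝ, 0 < y → ∃ c : ℝ, c ≠ 0 ∧ c ^ n = y := by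
    intro y hy
    refine ⟨y ^ ((n : ℝ)⁻¹), (Real.rpow_pos_of_pos hy _).ne', ?_⟩
    rw [← Real.rpow_intCast (y ^ ((n:ℝ)⁻¹)) n, ← Real.rpow_mul hy.le,
      inv_mul_cancel₀ (by exact_mod_cast hn0), Real.rpow_one]
  rcases hy.lt_or_gt with h | h
  · obtain ⟨c, hc, hcn⟩ := key (-y) (by linarith)
    exact ⟨-c, neg_ne_zero.2 hc, by rw [hn.neg_zpow, hcn, neg_neg]⟩
  · exact key y h

lemma odd_pow_eq_one {n : ℤ} (hn : Odd n) {c : ℝ} (hc : c ≠ 0) (h : c ^ n = 1) : c = 1 := by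
  have hcpos : 0 < c := by
    by_contra hle
    have h2 : c < 0 := lt_of_le_of_ne (not_lt.1 hle) hc
    have := hn.zpow_neg h2
    linarith [h ▸ this]
  have hlog : (n : ℝ) * Real.log c = 0 := by
    rw [← Real.log_zpow, h, Real.log_one]
  have hl : Real.log c = 0 := by
    rcases mul_eq_zero.1 hlog with h' | h'
    · exact absurd (by exact_mod_cast h') (by rintro rfl; simp at hn : n ≠ 0)
    · exact h'
  calc c = Real.exp (Real.log c) := (Real.exp_log hcpos).symm
    _ = 1 := by rw [hl, Real.exp_zero]

/-- Let `G = ℝ* ⋉ ℝ` be the `ax+b` group with multiplication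
`(q,v)(q',v') = (qq', v + qv')`, and for `k ∈ ℤ` let `ρ_k : G → GL₂(ℝ)` be as above (a group
homomorphism). Let `G` act on `ℝ²` by the contragredient action `g · w = (ρ_k(g)ᵀ)⁻¹ w`. Then
there is a point `w₀ ∈ ℝ²` whose orbit is free and has full Lebesgue measure if and only if
`k` is even. -/
theorem rhoK_free_full_orbit_iff_even (k : ℤ) :
    (∀ (q q' : ℝˣ) (v v' : ℝ),
        rhoK k (q * q') (v + (q : ℝ) * v') = rhoK k q v * rhoK k q' v') ∧
    ((∃ w₀ : Fin 2 → ℝ,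
        (∀ (q : ℝˣ) (v : ℝ), ((rhoK k q v)ᵀ)⁻¹.mulVec w₀ = w₀ → q = 1 ∧ v = 0) ∧
        volume ((Set.range fun g : ℝˣ × ℝ => ((rhoK k g.1 g.2)ᵀ)⁻¹.mulVec w₀)ᶜ) = 0) ↔
      Even k) := by
  constructor
  · -- homomorphism
    intro q q' v v'
    have hq : (q : ℝ) ≠ 0 := q.ne_zero
    have hq' : (q' : ℝ) ≠ 0 := q'.ne_zero
    simp only [rhoK, Units.val_zpow_eq_zpow_val, Units.val_mul, Matrix.mul_fin_two,
      mul_zpow, zpow_add_one₀ hq, zpow_add_one₀ hq']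
    congr 1 <;> ring
  constructor
  · -- free full orbit → even
    rintro ⟨w₀, hfree, hmeas⟩
    by_contra hodd
    rw [Int.not_even_iff_odd] at hodd
    have heven : Even (-k - 1) := by
      obtain ⟨m, hm⟩ := hodd
      exact ⟨-m - 1, by omega⟩
    -- w₀ 1 ≠ 0
    have hb : w₀ 1 ≠ 0 := by
      intro hb0
      have h := hfree 1 1 ?_
      · exact one_ne_zero h.2
      · rw [rhoK_mulVec]
        funext i
        fin_cases i <;> simp [hb0]
    -- the half-plane of opposite sign is in the complement
    set S : Set (Fin 2 → ℝ) := {w | w 1 * w₀ 1 < 0} with hS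
    have hSopen : IsOpen S :=
      isOpen_Iio.preimage ((continuous_apply 1).mul continuous_const)
    have hSne : S.Nonempty := by
      refine ⟨![0, -w₀ 1], ?_⟩
      simp only [hS, Set.mem_setOf_eq, Matrix.cons_val_one, Matrix.head_cons, Matrix.cons_val_zero]
      nlinarith [mul_self_pos.2 hb]
    have hsub : S ⊆ (Set.range fun g : ℝˣ × ℝ => ((rhoK k g.1 g.2)ᵀ)⁻¹.mulVec w₀)ᶜ := by
      intro w hw
      rintro ⟨⟨q, v⟩, rfl⟩
      simp only [rhoK_mulVec, hS, Set.mem_setOf_eq, Matrix.cons_val_one,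
        Matrix.head_cons, Matrix.cons_val_zero] at hw
      have hpos : 0 < (q:ℝ)^(-k-1) := heven.zpow_pos q.ne_zero
      nlinarith [mul_self_pos.2 hb]
    have : volume S = 0 :=
      le_antisymm (hmeas ▸ measure_mono hsub) zero_le
    exact absurd this (hSopen.measure_pos volume hSne).ne'
  · -- even → free full orbit
    intro hk
    have hodd : Odd (-k - 1) := by
      obtain ⟨m, hm⟩ := hk
      exact ⟨-m - 1, by omega⟩
    refine ⟨![0, 1], ?_, ?_⟩
    · intro q v h
      rw [rhoK_mulVec] at h
      have h1 := congrFun h 1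
      have h0 := congrFun h 0
      simp only [Matrix.cons_val_one, Matrix.head_cons, Matrix.cons_val_zero, mul_one,
        mul_zero, zero_add] at h1 h0
      have hq1 : (q : ℝ) = 1 := odd_pow_eq_one hodd q.ne_zero h1
      have hq : q = 1 := Units.ext (by simpa using hq1)
      refine ⟨hq, ?_⟩
      rw [hq1] at h0
      simpa using h0
    · have hsub : (Set.range fun g : ℝˣ × ℝ => ((rhoK k g.1 g.2)ᵀ)⁻¹.mulVec ![0, 1])ᶜ ⊆
          (LinearMap.ker (LinearMap.proj 1 : (Fin 2 → ℝ) →ₗ[ℝ] ℝ) : Set (Fin 2 → ℝ)) := by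
        intro w hw
        simp only [SetLike.mem_coe, LinearMap.mem_ker, LinearMap.proj_apply]
        by_contra hy
        apply hw
        obtain ⟨c, hc, hcn⟩ := odd_root hodd hy
        refine ⟨⟨Units.mk0 c hc, w 0 / w 1⟩, ?_⟩
        show ((rhoK k (Units.mk0 c hc) (w 0 / w 1))ᵀ)⁻¹.mulVec ![0, 1] = w
        rw [rhoK_mulVec]
        funext i
        fin_cases i <;>
          simp only [Units.val_mk0, hcn, Matrix.cons_val_zero, Matrix.cons_val_one,
            Matrix.head_cons, mul_zero, zero_add, mul_one]
        · field_simp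
          rfl
        · rfl
      refine le_antisymm ?_ zero_le
      refine le_trans (measure_mono hsub) (le_of_eq ?_)
      apply Measure.addHaar_submodule
      intro htop
      have : (![0, 1] : Fin 2 → ℝ) ∈ LinearMap.ker (LinearMap.proj 1 : (Fin 2 → ℝ) →ₗ[ℝ] ℝ) := by
        rw [htop]; trivial
      simpa using this
end

section
/- Let G be a second countable locally compact Hausdorff group with left Haar measure μ, let N ⊆ G be a closed subset with μ(N) = 0, let f̃ : N → ℂ be a continuous function with compact support, and let ε > 0. Then there exists a continuous compactly supported function f : G → ℂ such that f restricted to N equals f̃, the supremum of |f| over G equals the supremum of |f̃| over N, and ∫_G |f| dμ < ε. (Any compactly supported continuous function on a closed null set extends to a compactly supported continuous function with the same supremum norm and arbitrarily small L¹-norm.) -/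
open MeasureTheory

/-- Let `G` be a second countable locally compact Hausdorff group with left
Haar measure `μ`, let `N ⊆ G` be a closed subset with `μ(N) = 0`, let `f̃ : N → ℂ` be a
continuous function with compact support, and let `ε > 0`. Then `f̃` extends to a continuous
compactly supported function `f : G → ℂ` with the same supremum norm and with `L¹`-norm smaller
than `ε`. -/
theorem extension_from_closed_null_set
    (G : Type*) [Group G] [TopologicalSpace G] [IsTopologicalGroup G] [LocallyCompactSpace G]
    [T2Space G] [SecondCountableTopology G] [MeasurableSpace G] [BorelSpace G]
    (μ : Measure G) [μ.IsHaarMeasure]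
    (N : Set G) (hNclosed : IsClosed N) (hNnull : μ N = 0)
    (ftilde : N → ℂ) (hfc : Continuous ftilde) (hfs : HasCompactSupport ftilde)
    (ε : ℝ) (hε : 0 < ε) :
    ∃ f : G → ℂ, Continuous f ∧ HasCompactSupport f ∧
      (∀ x : N, f x = ftilde x) ∧
      (⨆ x : G, ‖f x‖) = (⨆ x : N, ‖ftilde x‖) ∧
      (∫ x, ‖f x‖ ∂μ) < ε := by
  classical
  -- the zero function works whenever `ftilde = 0` and the sup of `ftilde` is `0`
  have hzero : (∀ x : N, ftilde x = 0) → (⨆ x : N, ‖ftilde x‖) = 0 →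
      ∃ f : G → ℂ, Continuous f ∧ HasCompactSupport f ∧
      (∀ x : N, f x = ftilde x) ∧
      (⨆ x : G, ‖f x‖) = (⨆ x : N, ‖ftilde x‖) ∧
      (∫ x, ‖f x‖ ∂μ) < ε := by
    intro h0 hsup
    refine ⟨0, continuous_const, ?_, fun x => (h0 x).symm, ?_, ?_⟩
    · simpa [HasCompactSupport, tsupport, Function.support] using isCompact_empty
    · rw [hsup]
      simp [ciSup_const]
    · simpa using hε
  rcases isEmpty_or_nonempty N with hNe | hNe
  · refine hzero (fun x => (hNe.false x).elim) ?_
    exact Real.iSup_of_isEmpty _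
  -- nonempty case
  set M : ℝ := ⨆ x : N, ‖ftilde x‖ with hMdef
  obtain ⟨C, hC⟩ := hfs.exists_bound_of_continuous hfc
  have hBdd : BddAbove (Set.range fun x : N => ‖ftilde x‖) :=
    ⟨C, by rintro _ ⟨x, rfl⟩; exact hC x⟩
  have hle : ∀ x : N, ‖ftilde x‖ ≤ M := fun x => le_ciSup hBdd x
  have hM0 : 0 ≤ M := le_trans (norm_nonneg _) (hle hNe.some)
  rcases eq_or_lt_of_le hM0 with hM | hM
  · -- sup is zero, hence ftilde = 0
    refine hzero (fun x => ?_) hM.symm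
    have := hle x
    rw [← hM] at this
    simpa using le_antisymm this (norm_nonneg _)
  -- now 0 < M
  -- Tietze extension
  obtain ⟨g, hg⟩ := ContinuousMap.exists_restrict_eq (Y := ℂ) hNclosed ⟨ftilde, hfc⟩
  have hgN : ∀ x : N, g x = ftilde x := fun x => DFunLike.congr_fun hg x
  -- retraction onto the closed ball of radius M
  set r : ℂ → ℂ := fun z => (M / max M ‖z‖) • z with hrdef
  have hmaxpos : ∀ z : ℂ, 0 < max M ‖z‖ := fun z => lt_max_of_lt_left hM
  have hrcont : Continuous r := by
    apply Continuous.smul (f := fun z : ℂ => M / max M ‖z‖) _ continuous_id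
    exact continuous_const.div (continuous_const.max continuous_norm)
      fun z => (hmaxpos z).ne'
  have hrnorm : ∀ z : ℂ, ‖r z‖ ≤ M := by
    intro z
    have : ‖r z‖ = (M / max M ‖z‖) * ‖z‖ := by
      rw [hrdef]
      simp only [norm_smul, Real.norm_eq_abs]
      rw [abs_of_nonneg (div_nonneg hM0 (hmaxpos z).le)]
    rw [this, div_mul_eq_mul_div, div_le_iff₀ (hmaxpos z)]
    exact mul_le_mul_of_nonneg_left (le_max_right _ _) hM0
  have hrfix : ∀ z : ℂ, ‖z‖ ≤ M → r z = z := by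
    intro z hz
    rw [hrdef]
    simp only [max_eq_left hz, div_self hM.ne', one_smul]
  set h : G → ℂ := fun x => r (g x) with hhdef
  have hhc : Continuous h := hrcont.comp g.continuous
  have hhN : ∀ x : N, h x = ftilde x := fun x => by
    rw [hhdef]; simp only [hgN x]; exact hrfix _ (hle x)
  -- compact set in G
  set K : Set G := Subtype.val '' tsupport ftilde with hKdef
  have hKcomp : IsCompact K := hfs.image continuous_subtype_val
  have hKN : K ⊆ N := by rintro _ ⟨x, _, rfl⟩; exact x.2
  have hKnull : μ K = 0 := measure_mono_null hKN hNnull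
  -- small open neighborhood of K
  have hδ : (0 : ENNReal) < ENNReal.ofReal (ε / (M + 1)) := by
    rw [ENNReal.ofReal_pos]; positivity
  obtain ⟨U, hKU, hUopen, hUμ⟩ :=
    Set.exists_isOpen_lt_of_lt K _ (hKnull ▸ hδ)
  obtain ⟨L, hLcomp, hKL⟩ := exists_compact_superset hKcomp
  set V : Set G := U ∩ interior L with hVdef
  have hVopen : IsOpen V := hUopen.inter isOpen_interior
  have hKV : K ⊆ V := Set.subset_inter hKU hKL
  have hVμ : μ V < ENNReal.ofReal (ε / (M + 1)) :=
    lt_of_le_of_lt (measure_mono Set.inter_subset_left) hUμ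
  have hclV : closure V ⊆ L :=
    (closure_mono Set.inter_subset_right).trans
      (closure_minimal interior_subset hLcomp.isClosed)
  have hclVcomp : IsCompact (closure V) := hLcomp.of_isClosed_subset isClosed_closure hclV
  -- Urysohn function
  obtain ⟨χ, hχsupp, hχone, hχmem⟩ :=
    exists_tsupport_one_of_isOpen_isClosed hVopen hclVcomp hKcomp.isClosed hKV
  set f : G → ℂ := fun x => (χ x : ℂ) • h x with hfdef
  have hfcont : Continuous f :=
    ((Complex.continuous_ofReal.comp χ.continuous).smul hhc)
  have hfsupp : Function.support f ⊆ V := by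
    intro x hx
    have hχx : χ x ≠ 0 := by
      intro h0
      apply hx
      rw [hfdef]; simp [h0]
    exact hχsupp (subset_tsupport χ (by simpa using hχx))
  have hfCS : HasCompactSupport f :=
    HasCompactSupport.of_support_subset_isCompact hclVcomp
      (hfsupp.trans subset_closure)
  have hfN : ∀ x : N, f x = ftilde x := by
    intro x
    by_cases hx : x ∈ tsupport ftilde
    · have hxK : (x : G) ∈ K := ⟨x, hx, rfl⟩
      rw [hfdef]
      simp only [hχone hxK, Pi.one_apply, Complex.ofReal_one, one_smul]
      exact hhN x
    · have h0 : ftilde x = 0 := image_eq_zero_of_notMem_tsupport hx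
      simp only [hfdef]
      rw [hhN x, h0, smul_zero]
  have hfbound : ∀ y : G, ‖f y‖ ≤ M := by
    intro y
    rw [hfdef]
    simp only [norm_smul, Complex.norm_real, Real.norm_eq_abs]
    calc |χ y| * ‖h y‖ ≤ 1 * M := by
          apply mul_le_mul _ (hrnorm _) (norm_nonneg _) zero_le_one
          rw [abs_of_nonneg (hχmem y).1]; exact (hχmem y).2
      _ = M := one_mul M
  have hsup : (⨆ x : G, ‖f x‖) = M := by
    apply le_antisymm
    · exact ciSup_le hfbound
    · apply ciSup_le
      intro x
      calc ‖ftilde x‖ = ‖f x‖ := by rw [hfN x]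
        _ ≤ ⨆ y : G, ‖f y‖ := le_ciSup ⟨M, by rintro _ ⟨y, rfl⟩; exact hfbound y⟩ (x : G)
  -- integral estimate
  have hVne : μ V ≠ ⊤ := hVμ.ne_top
  have hint : Integrable f μ := hfcont.integrable_of_hasCompactSupport hfCS
  have hIeq : (∫ x, ‖f x‖ ∂μ) = ∫ x in V, ‖f x‖ ∂μ := by
    rw [setIntegral_eq_integral_of_forall_compl_eq_zero]
    intro x hx
    rw [show f x = 0 from Function.notMem_support.mp fun hc => hx (hfsupp hc), norm_zero]
  have hIle : (∫ x in V, ‖f x‖ ∂μ) ≤ (μ V).toReal * M := by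
    calc (∫ x in V, ‖f x‖ ∂μ) ≤ ∫ _ in V, M ∂μ := by
          apply setIntegral_mono_on hint.norm.integrableOn
            (integrableOn_const hVne) hVopen.measurableSet
          intro x _; exact hfbound x
      _ = (μ V).toReal * M := by rw [setIntegral_const, smul_eq_mul]; rfl
  have htoReal : (μ V).toReal < ε / (M + 1) := by
    rw [← ENNReal.ofReal_toReal hVne] at hVμ
    exact (ENNReal.ofReal_lt_ofReal_iff_of_nonneg ENNReal.toReal_nonneg).mp hVμ
  have hfinal : (μ V).toReal * M < ε := by
    have ht0 : (0:ℝ) ≤ (μ V).toReal := ENNReal.toReal_nonneg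
    have h1 : (μ V).toReal * (M + 1) < ε := by
      rw [← lt_div_iff₀ (by positivity : (0:ℝ) < M + 1)]
      exact htoReal
    nlinarith
  exact ⟨f, hfcont, hfCS, hfN, hsup ▸ rfl, lt_of_le_of_lt (hIeq ▸ hIle) hfinal⟩
end
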